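/- arXiv:2512.01876 — 9 statements merged into one kernel-verified Lean document; each statement's English description precedes it below -/
import Mathlib

section
/- Let Σ_pk ⊆ ℝ^{n×n}×ℝ^{n×m} be open in the Euclidean topology, let (A_true,B_true) ∈ Σ_pk, and let D be input-state data of length T consistent with (A_true,B_true). Then the following are equivalent: (a) D is Σ_pk-informative for identification; (b) D is M-informative for identification (i.e., Σ_D is a singleton); (c) the (n+m)×T matrix obtained by stacking X_- on top of U_- has rank n+m. -/
open Matrix

/-- A system: a pair `(A, B)` of real matrices of sizes `n × n` and `n × m`. -/
abbrev Sys (n m : ℕ) := Matrix (Fin n) (Fin n) ℝ × Matrix (Fin n) (Fin m) ℝ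

/-- `(A, B)` is consistent with the input-state data `(u, x)` of length `T`. -/
def Consistent {n m T : ℕ} (A : Matrix (Fin n) (Fin n) ℝ) (B : Matrix (Fin n) (Fin m) ℝ)
    (u : Fin T → Fin m → ℝ) (x : Fin (T + 1) → Fin n → ℝ) : Prop :=
  ∀ t : Fin T, x t.succ = A.mulVec (x t.castSucc) + B.mulVec (u t)

/-- The set `Σ_D` of systems consistent with the data `(u, x)`. -/
def SigmaD {n m T : ℕ} (u : Fin T → Fin m → ℝ) (x : Fin (T + 1) → Fin n → ℝ) :
    Set (Sys n m) :=
  {AB | Consistent AB.1 AB.2 u x}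

/-- The matrix `X₋ = [x(0) ⋯ x(T-1)]`. -/
def Xminus {n T : ℕ} (x : Fin (T + 1) → Fin n → ℝ) : Matrix (Fin n) (Fin T) ℝ :=
  Matrix.of fun i t => x t.castSucc i

/-- The matrix `X₊ = [x(1) ⋯ x(T)]`. -/
def Xplus {n T : ℕ} (x : Fin (T + 1) → Fin n → ℝ) : Matrix (Fin n) (Fin T) ℝ :=
  Matrix.of fun i t => x t.succ i

/-- The matrix `U₋ = [u(0) ⋯ u(T-1)]`. -/
def Uminus {m T : ℕ} (u : Fin T → Fin m → ℝ) : Matrix (Fin m) (Fin T) ℝ :=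
  Matrix.of fun i t => u t i

/-- The stacked matrix `[X₋; U₋]`. -/
def stacked {n m T : ℕ} (X : Matrix (Fin n) (Fin T) ℝ) (U : Matrix (Fin m) (Fin T) ℝ) :
    Matrix (Fin n ⊕ Fin m) (Fin T) ℝ :=
  Matrix.fromRows X U

/-- A real square matrix is Schur if all its complex eigenvalues have modulus `< 1`. -/
def Schur {n : ℕ} (M : Matrix (Fin n) (Fin n) ℝ) : Prop :=
  ∀ μ ∈ spectrum ℂ (M.map ((↑·) : ℝ → ℂ)), ‖μ‖ < 1

/-- The matrix `[C  AC  ⋯  A^{n-1}C]`. -/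
def reachMat {n : ℕ} (A : Matrix (Fin n) (Fin n) ℝ) {p : Type*} (C : Matrix (Fin n) p ℝ) :
    Matrix (Fin n) (Fin n × p) ℝ :=
  Matrix.of fun i q => (A ^ (q.1 : ℕ) * C) i q.2

/-- The column span of a matrix, as a submodule. -/
def colSpan {p : Type*} {q : Type*} [Fintype q] (M : Matrix p q ℝ) :
    Submodule ℝ (p → ℝ) :=
  LinearMap.range M.mulVecLin

/-- The reachable subspace `R(A, C)`: the column span of `[C AC ⋯ A^{n-1}C]`. -/
def Rspace {n : ℕ} (A : Matrix (Fin n) (Fin n) ℝ) {p : Type*} [Fintype p]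
    (C : Matrix (Fin n) p ℝ) : Submodule ℝ (Fin n → ℝ) :=
  colSpan (reachMat A C)

/-- `(A, B)` is controllable. -/
def Controllable {n m : ℕ} (A : Matrix (Fin n) (Fin n) ℝ) (B : Matrix (Fin n) (Fin m) ℝ) :
    Prop :=
  (reachMat A B).rank = n

/-- `(A, B)` is stabilizable. -/
def Stabilizable {n m : ℕ} (A : Matrix (Fin n) (Fin n) ℝ) (B : Matrix (Fin n) (Fin m) ℝ) :
    Prop :=
  ∃ K : Matrix (Fin m) (Fin n) ℝ, Schur (A + B * K)

/-- The set `Σ_cont` of controllable systems. -/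
def SigmaCont (n m : ℕ) : Set (Sys n m) := {AB | Controllable AB.1 AB.2}

/-- The set `Σ_stab` of stabilizable systems. -/
def SigmaStab (n m : ℕ) : Set (Sys n m) := {AB | Stabilizable AB.1 AB.2}

/-- Data `(u, x)` is `P`-informative for identification: `Σ_D ∩ P` is a singleton. -/
def InfId {n m T : ℕ} (P : Set (Sys n m)) (u : Fin T → Fin m → ℝ)
    (x : Fin (T + 1) → Fin n → ℝ) : Prop :=
  ∃ s : Sys n m, SigmaD u x ∩ P = {s}

/-- Data `(u, x)` is `P`-informative for stabilization. -/
def InfStab {n m T : ℕ} (P : Set (Sys n m)) (u : Fin T → Fin m → ℝ)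
    (x : Fin (T + 1) → Fin n → ℝ) : Prop :=
  ∃ K : Matrix (Fin m) (Fin n) ℝ, ∀ AB ∈ SigmaD u x ∩ P, Schur (AB.1 + AB.2 * K)

/-- An input is `P`-universal for identification. -/
def UnivId {n m T : ℕ} (P : Set (Sys n m)) (u : Fin T → Fin m → ℝ) : Prop :=
  ∀ AB ∈ P, ∀ x : Fin (T + 1) → Fin n → ℝ, Consistent AB.1 AB.2 u x → InfId P u x

/-- An input is `P`-universal for stabilization. -/
def UnivStab {n m T : ℕ} (P : Set (Sys n m)) (u : Fin T → Fin m → ℝ) : Prop :=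
  ∀ AB ∈ P, ∀ x : Fin (T + 1) → Fin n → ℝ, Consistent AB.1 AB.2 u x → InfStab P u x

/-- The Hankel matrix of depth `k` of the input sequence `u`. -/
def Hankel {m T : ℕ} (u : Fin T → Fin m → ℝ) (k : ℕ) :
    Matrix (Fin k × Fin m) (Fin (T + 1 - k)) ℝ :=
  Matrix.of fun q i =>
    u ⟨i.val + q.1.val, by have h1 := i.isLt; have h2 := q.1.isLt; omega⟩ q.2

/-- The input sequence `u` is persistently exciting of order `k`. -/
def PE {m T : ℕ} (u : Fin T → Fin m → ℝ) (k : ℕ) : Prop :=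
  (Hankel u k).rank = k * m

/-- The matrix `[B  x₀]` obtained by appending the column `x₀` to `B`. -/
def augCol {n m : ℕ} (B : Matrix (Fin n) (Fin m) ℝ) (x0 : Fin n → ℝ) :
    Matrix (Fin n) (Fin m ⊕ Fin 1) ℝ :=
  Matrix.fromCols B (Matrix.of fun i _ => x0 i)

/-- Precomposition with `Sum.inl`, extracting the `ℝ^n`-component of a vector in
`ℝ^n × ℝ^m ≃ (Fin n ⊕ Fin m) → ℝ`. -/
def projN (n m : ℕ) : ((Fin n ⊕ Fin m) → ℝ) →ₗ[ℝ] (Fin n → ℝ) :=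
  LinearMap.funLeft ℝ ℝ Sum.inl

lemma rank_eq_card_iff_vecMul_injective {α β : Type*} [Fintype α] [Fintype β] [DecidableEq α]
    (W : Matrix α β ℝ) :
    W.rank = Fintype.card α ↔ ∀ v : α → ℝ, v ᵥ* W = 0 → v = 0 := by
  rw [← Matrix.rank_transpose]
  have hrn := LinearMap.finrank_range_add_finrank_ker Wᵀ.mulVecLin
  have hdom : Module.finrank ℝ (α → ℝ) = Fintype.card α := Module.finrank_fintype_fun_eq_card ℝ
  have hker : (∀ v : α → ℝ, v ᵥ* W = 0 → v = 0) ↔ LinearMap.ker Wᵀ.mulVecLin = ⊥ := by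
    rw [LinearMap.ker_eq_bot']
    constructor
    · intro h v hv
      exact h v (by rw [← Matrix.mulVec_transpose]; exact hv)
    · intro h v hv
      exact h v (by rw [Matrix.mulVecLin_apply, Matrix.mulVec_transpose]; exact hv)
  rw [hker]
  unfold Matrix.rank
  constructor
  · intro h
    rw [h, hdom] at hrn
    have : Module.finrank ℝ (LinearMap.ker Wᵀ.mulVecLin) = 0 := by omega
    exact Submodule.finrank_eq_zero.mp this
  · intro h
    rw [h] at hrn
    simp at hrn
    omega


/-- For open prior knowledge `Σ_pk` containing the true system,
`Σ_pk`-informativity for identification, `M`-informativity for identification, and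
`rank [X₋; U₋] = n + m` are equivalent. -/
theorem stmt_0 {n m T : ℕ} (hn : 0 < n) (hm : 0 < m)
    (P : Set (Sys n m)) (hP : IsOpen P)
    (Atrue : Matrix (Fin n) (Fin n) ℝ) (Btrue : Matrix (Fin n) (Fin m) ℝ)
    (hpk : (Atrue, Btrue) ∈ P)
    (u : Fin T → Fin m → ℝ) (x : Fin (T + 1) → Fin n → ℝ)
    (hcons : Consistent Atrue Btrue u x) :
    (InfId P u x ↔ (∃ s : Sys n m, SigmaD u x = {s})) ∧
    ((∃ s : Sys n m, SigmaD u x = {s}) ↔ (stacked (Xminus x) (Uminus u)).rank = n + m) := by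
  set W := stacked (Xminus x) (Uminus u) with hWdef
  have hvw : ∀ (v : Fin n ⊕ Fin m → ℝ) (t : Fin T),
      (v ᵥ* W) t = (∑ j, v (Sum.inl j) * x t.castSucc j) + ∑ j, v (Sum.inr j) * u t j := by
    intro v t
    simp [hWdef, stacked, Xminus, Uminus, Matrix.vecMul, dotProduct, Fintype.sum_sum_type,
      Matrix.fromRows_apply_inl, Matrix.fromRows_apply_inr]
  have hrow : ∀ (A : Matrix (Fin n) (Fin n) ℝ) (B : Matrix (Fin n) (Fin m) ℝ),
      (A, B) ∈ SigmaD u x ↔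
        ∀ (t : Fin T) (i : Fin n),
          x t.succ i = (∑ j, A i j * x t.castSucc j) + ∑ j, B i j * u t j := by
    intro A B
    simp [SigmaD, Consistent, funext_iff, Matrix.mulVec, dotProduct]
  have htrue : (Atrue, Btrue) ∈ SigmaD u x := hcons
  -- homogeneous direction
  have hdiff : ∀ A B, (A, B) ∈ SigmaD u x → ∀ i : Fin n,
      (Sum.elim (fun j => A i j - Atrue i j) (fun j => B i j - Btrue i j)) ᵥ* W = 0 := by
    intro A B hAB i
    funext t
    have h1 := (hrow A B).mp hAB t i
    have h2 := (hrow Atrue Btrue).mp hcons t i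
    rw [hvw]
    simp only [Sum.elim_inl, Sum.elim_inr, Pi.zero_apply, sub_mul,
      Finset.sum_sub_distrib]
    linarith
  have i0 : Fin n := ⟨0, hn⟩
  -- building a consistent system from a kernel vector
  have hbuild : ∀ v : Fin n ⊕ Fin m → ℝ, v ᵥ* W = 0 →
      ((Atrue + Matrix.of fun i j => if i = i0 then v (Sum.inl j) else 0),
       (Btrue + Matrix.of fun i j => if i = i0 then v (Sum.inr j) else 0)) ∈ SigmaD u x := by
    intro v hv
    rw [hrow]
    intro t i
    have h2 := (hrow Atrue Btrue).mp hcons t i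
    have h0 := congrFun hv t
    rw [hvw] at h0
    simp only [Pi.zero_apply] at h0
    simp only [Matrix.add_apply, Matrix.of_apply, add_mul, Finset.sum_add_distrib]
    by_cases hi : i = i0
    · subst hi
      simp only [if_pos rfl, eq_self_iff_true, if_true]
      linarith
    · simp only [if_neg hi, zero_mul, Finset.sum_const_zero, add_zero]
      linarith
  -- the perturbation argument
  have hperturb : InfId P u x → ∀ s' ∈ SigmaD u x, s' = (Atrue, Btrue) := by
    rintro ⟨s, hs⟩ ⟨A, B⟩ hAB
    have htrueP : (Atrue, Btrue) ∈ SigmaD u x ∩ P := ⟨htrue, hpk⟩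
    rw [hs] at htrueP
    have hcont : Continuous fun ε : ℝ =>
        ((Atrue + ε • (A - Atrue), Btrue + ε • (B - Btrue)) : Sys n m) := by
      fun_prop
    have hopen := hP.preimage hcont
    have h0mem : (0 : ℝ) ∈ (fun ε : ℝ =>
        ((Atrue + ε • (A - Atrue), Btrue + ε • (B - Btrue)) : Sys n m)) ⁻¹' P := by
      simp [hpk]
    obtain ⟨δ, hδ, hball⟩ := Metric.isOpen_iff.mp hopen 0 h0mem
    set ε : ℝ := δ / 2 with hε
    have hεpos : 0 < ε := by positivity
    have hεP : (Atrue + ε • (A - Atrue), Btrue + ε • (B - Btrue)) ∈ P := by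
      apply hball
      simp only [Metric.mem_ball, Real.dist_eq, sub_zero, abs_of_pos hεpos]
      linarith
    have hεD : (Atrue + ε • (A - Atrue), Btrue + ε • (B - Btrue)) ∈ SigmaD u x := by
      rw [hrow]
      intro t i
      have h1 := (hrow A B).mp hAB t i
      have h2 := (hrow Atrue Btrue).mp hcons t i
      simp only [Matrix.add_apply, Matrix.smul_apply, Matrix.sub_apply, smul_eq_mul,
        add_mul, mul_assoc, Finset.sum_add_distrib, ← Finset.mul_sum, sub_mul,
        Finset.sum_sub_distrib]
      linear_combination h2 + ε * h1 - ε * h2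
    have hmem : (Atrue + ε • (A - Atrue), Btrue + ε • (B - Btrue)) ∈ SigmaD u x ∩ P :=
      ⟨hεD, hεP⟩
    rw [hs] at hmem
    have heq : (Atrue + ε • (A - Atrue), Btrue + ε • (B - Btrue)) = (Atrue, Btrue) := by
      rw [Set.mem_singleton_iff] at hmem htrueP
      rw [hmem, ← htrueP]
    have hA : A = Atrue := by
      have h1 : ε • (A - Atrue) = 0 := by
        have := congrArg Prod.fst heq
        simpa using this
      rcases smul_eq_zero.mp h1 with h | h
      · exact absurd h (ne_of_gt hεpos)
      · exact sub_eq_zero.mp h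
    have hB : B = Btrue := by
      have h1 : ε • (B - Btrue) = 0 := by
        have := congrArg Prod.snd heq
        simpa using this
      rcases smul_eq_zero.mp h1 with h | h
      · exact absurd h (ne_of_gt hεpos)
      · exact sub_eq_zero.mp h
    rw [hA, hB]
  constructor
  · constructor
    · intro hInf
      exact ⟨(Atrue, Btrue), Set.eq_singleton_iff_unique_mem.mpr
        ⟨htrue, fun s' h => hperturb hInf s' h⟩⟩
    · rintro ⟨s, hs⟩
      refine ⟨s, ?_⟩
      have hst : s = (Atrue, Btrue) := by
        have := htrue
        rw [hs] at this
        exact this.symm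
      rw [hs, hst]
      exact Set.inter_eq_self_of_subset_left (Set.singleton_subset_iff.mpr hpk)
  · have hcard : Fintype.card (Fin n ⊕ Fin m) = n + m := by simp
    rw [← hcard, rank_eq_card_iff_vecMul_injective]
    constructor
    · rintro ⟨s, hs⟩ v hv
      have hmem := hbuild v hv
      rw [hs, Set.mem_singleton_iff] at hmem
      have htr := htrue
      rw [hs, Set.mem_singleton_iff] at htr
      have heq := hmem.trans htr.symm
      funext j
      cases j with
      | inl j =>
        have := congrFun (congrFun (congrArg Prod.fst heq) i0) j
        simpa using this
      | inr j =>
        have := congrFun (congrFun (congrArg Prod.snd heq) i0) j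
        simpa using this
    · intro h
      refine ⟨(Atrue, Btrue), Set.eq_singleton_iff_unique_mem.mpr ⟨htrue, ?_⟩⟩
      rintro ⟨A, B⟩ hAB
      have hz := fun i => h _ (hdiff A B hAB i)
      have hA : A = Atrue := by
        ext i j
        have := congrFun (hz i) (Sum.inl j)
        simpa [sub_eq_zero] using this
      have hB : B = Btrue := by
        ext i j
        have := congrFun (hz i) (Sum.inr j)
        simpa [sub_eq_zero] using this
      rw [hA, hB]
end

section
/- Suppose (A_true,B_true) is stabilizable and D is input-state data of length T consistent with (A_true,B_true). Then D is Σ_stab-informative for identification if and only if D is M-informative for identification (i.e., Σ_D is a singleton). -/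
open Matrix
open scoped ENNReal NNReal

section SchurAux

attribute [local instance] Matrix.linftyOpNormedRing Matrix.linftyOpNormedAlgebra

variable {n : ℕ}

lemma schur_of_pow_norm_lt (hn : 0 < n) {M : Matrix (Fin n) (Fin n) ℝ} {k : ℕ} (hk : 0 < k)
    (h : ‖(M.map ((↑·) : ℝ → ℂ)) ^ k‖ < 1) : Schur M := by
  haveI : Nonempty (Fin n) := ⟨⟨0, hn⟩⟩
  intro μ hμ
  have h1 : μ ^ k ∈ spectrum ℂ ((M.map ((↑·) : ℝ → ℂ)) ^ k) :=
    spectrum.pow_image_subset _ k ⟨μ, hμ, rfl⟩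
  have h2 : ‖μ ^ k‖ ≤ ‖(M.map ((↑·) : ℝ → ℂ)) ^ k‖ := spectrum.norm_le_norm_of_mem h1
  have h3 : ‖μ‖ ^ k < 1 := by
    rw [← norm_pow]
    exact lt_of_le_of_lt h2 h
  exact (pow_lt_one_iff_of_nonneg (norm_nonneg μ) hk.ne').mp h3

lemma exists_pow_norm_lt_of_schur (hn : 0 < n) {M : Matrix (Fin n) (Fin n) ℝ}
    (hM : Schur M) : ∃ k : ℕ, 0 < k ∧ ‖(M.map ((↑·) : ℝ → ℂ)) ^ k‖ < 1 := by
  haveI : Nonempty (Fin n) := ⟨⟨0, hn⟩⟩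
  set Mc := M.map ((↑·) : ℝ → ℂ) with hMc
  have hr : spectralRadius ℂ Mc < 1 := by
    have := spectrum.spectralRadius_lt_of_forall_lt (a := Mc) (r := 1)
      (fun z hz => by
        have := hM z hz
        rw [← coe_nnnorm] at this
        exact_mod_cast this)
    simpa using this
  have htend := (spectrum.pow_nnnorm_pow_one_div_tendsto_nhds_spectralRadius Mc).eventually
    (gt_mem_nhds hr)
  obtain ⟨k, hk1, hk2⟩ := (htend.and (Filter.eventually_gt_atTop 0)).exists
  refine ⟨k, hk2, ?_⟩
  by_contra hcon
  push_neg at hcon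
  have h1 : (1 : ℝ≥0∞) ≤ (‖Mc ^ k‖₊ : ℝ≥0∞) := by
    rw [← ENNReal.coe_one, ENNReal.coe_le_coe]
    exact_mod_cast hcon
  exact absurd (ENNReal.one_le_rpow h1 (by positivity)) (not_le.mpr hk1)

lemma schur_perturb (hn : 0 < n) {M : Matrix (Fin n) (Fin n) ℝ} (N : Matrix (Fin n) (Fin n) ℝ)
    (hM : Schur M) : ∃ t : ℝ, t ≠ 0 ∧ Schur (M + t • N) := by
  obtain ⟨k, hk, hMk⟩ := exists_pow_norm_lt_of_schur hn hM
  set Mc := M.map ((↑·) : ℝ → ℂ) with hMc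
  set Nc := N.map ((↑·) : ℝ → ℂ) with hNc
  have hcont : Continuous fun t : ℝ => ‖(Mc + t • Nc) ^ k‖ :=
    ((continuous_const.add (continuous_id.smul continuous_const)).pow k).norm
  have hopen : IsOpen {t : ℝ | ‖(Mc + t • Nc) ^ k‖ < 1} :=
    isOpen_lt hcont continuous_const
  have h0 : (0 : ℝ) ∈ {t : ℝ | ‖(Mc + t • Nc) ^ k‖ < 1} := by
    simpa using hMk
  obtain ⟨ε, hε, hball⟩ := Metric.isOpen_iff.mp hopen 0 h0
  refine ⟨ε / 2, by positivity, ?_⟩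
  have hmem : ‖(Mc + (ε / 2) • Nc) ^ k‖ < 1 := by
    apply hball
    rw [Metric.mem_ball, Real.dist_eq, sub_zero, abs_of_pos (by positivity)]
    linarith
  have hmap : (M + (ε / 2) • N).map ((↑·) : ℝ → ℂ) = Mc + (ε / 2) • Nc := by
    ext i j
    simp [hMc, hNc, Matrix.map_apply, Complex.real_smul]
  exact schur_of_pow_norm_lt hn hk (by rw [hmap]; exact hmem)

end SchurAux

/-- If the true system is stabilizable, then the data is
`Σ_stab`-informative for identification iff it is `M`-informative for identification. -/
theorem stmt_1 {n m T : ℕ} (hn : 0 < n) (hm : 0 < m)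
    (Atrue : Matrix (Fin n) (Fin n) ℝ) (Btrue : Matrix (Fin n) (Fin m) ℝ)
    (hstab : Stabilizable Atrue Btrue)
    (u : Fin T → Fin m → ℝ) (x : Fin (T + 1) → Fin n → ℝ)
    (hcons : Consistent Atrue Btrue u x) :
    InfId (SigmaStab n m) u x ↔ (∃ s : Sys n m, SigmaD u x = {s}) := by
  constructor
  · rintro ⟨s, hs⟩
    have hmem : (Atrue, Btrue) ∈ SigmaD u x ∩ SigmaStab n m := ⟨hcons, hstab⟩
    have hsval : s = (Atrue, Btrue) := by
      rw [hs] at hmem; exact hmem.symm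
    refine ⟨s, Set.eq_singleton_iff_unique_mem.mpr ⟨by rw [hsval]; exact hcons, ?_⟩⟩
    rintro ⟨A', B'⟩ hAB'
    obtain ⟨K, hK⟩ := hstab
    obtain ⟨t, ht0, htS⟩ := schur_perturb hn (N := (A' - Atrue) + (B' - Btrue) * K) hK
    set At := Atrue + t • (A' - Atrue) with hAt
    set Bt := Btrue + t • (B' - Btrue) with hBt
    have hSchur : Schur (At + Bt * K) := by
      have heq : At + Bt * K
          = (Atrue + Btrue * K) + t • ((A' - Atrue) + (B' - Btrue) * K) := by
        rw [hAt, hBt, Matrix.add_mul, Matrix.smul_mul]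
        simp only [smul_add]
        abel
      rw [heq]; exact htS
    have hconsT : (At, Bt) ∈ SigmaD u x := by
      intro tt
      have h1 := hcons tt
      have h2 := hAB' tt
      show x tt.succ = At.mulVec (x tt.castSucc) + Bt.mulVec (u tt)
      rw [hAt, hBt, Matrix.add_mulVec, Matrix.add_mulVec, Matrix.smul_mulVec,
        Matrix.smul_mulVec, Matrix.sub_mulVec, Matrix.sub_mulVec]
      have h3 : A'.mulVec (x tt.castSucc) + B'.mulVec (u tt)
          = Atrue.mulVec (x tt.castSucc) + Btrue.mulVec (u tt) := h2.symm.trans h1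
      have hre : Atrue.mulVec (x tt.castSucc)
            + t • (A'.mulVec (x tt.castSucc) - Atrue.mulVec (x tt.castSucc))
            + (Btrue.mulVec (u tt) + t • (B'.mulVec (u tt) - Btrue.mulVec (u tt)))
          = (Atrue.mulVec (x tt.castSucc) + Btrue.mulVec (u tt))
            + t • ((A'.mulVec (x tt.castSucc) + B'.mulVec (u tt))
              - (Atrue.mulVec (x tt.castSucc) + Btrue.mulVec (u tt))) := by
        simp only [smul_sub, smul_add]
        abel
      rw [hre, h3, sub_self, smul_zero, add_zero]
      exact h1
    have hmemT : (At, Bt) ∈ SigmaD u x ∩ SigmaStab n m := ⟨hconsT, ⟨K, hSchur⟩⟩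
    rw [hs, hsval] at hmemT
    have hA : t • (A' - Atrue) = 0 := by
      have := congrArg Prod.fst hmemT
      simpa [hAt] using this
    have hB : t • (B' - Btrue) = 0 := by
      have := congrArg Prod.snd hmemT
      simpa [hBt] using this
    have hA' : A' = Atrue := by
      rcases smul_eq_zero.mp hA with h | h
      · exact absurd h ht0
      · exact sub_eq_zero.mp h
    have hB' : B' = Btrue := by
      rcases smul_eq_zero.mp hB with h | h
      · exact absurd h ht0
      · exact sub_eq_zero.mp h
    rw [hsval, hA', hB']
  · rintro ⟨s, hs⟩
    have hsval : s = (Atrue, Btrue) := by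
      have hmem : (Atrue, Btrue) ∈ SigmaD u x := hcons
      rw [hs] at hmem; exact hmem.symm
    refine ⟨s, Set.eq_singleton_iff_unique_mem.mpr ⟨⟨by rw [hsval]; exact hcons, by rw [hsval]; exact hstab⟩, ?_⟩⟩
    intro q hq
    have : q ∈ SigmaD u x := hq.1
    rw [hs] at this; exact this
end

section
/- Let (A,B) be controllable and let the inputs u(0),…,u(T−1) be persistently exciting of order n+1. Then for every state sequence x(0),…,x(T) such that (A,B) is consistent with the data D = (u,x), the (n+m)×T matrix obtained by stacking X_- on top of U_- has rank n+m. -/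
open Matrix

section AuxWillems

open Finset

/-- helper: if `M *ᵥ` is injective then the rank equals the number of columns. -/
lemma rank_eq_card_of_inj' {p q : Type*} [Fintype p] [Fintype q] (M : Matrix p q ℝ)
    (h : ∀ v, M *ᵥ v = 0 → v = 0) : M.rank = Fintype.card q := by
  have hker : LinearMap.ker M.mulVecLin = ⊥ :=
    LinearMap.ker_eq_bot'.mpr (fun v hv => h v hv)
  have := LinearMap.finrank_range_add_finrank_ker M.mulVecLin
  rw [hker, finrank_bot, add_zero, Module.finrank_pi] at this
  simpa [Matrix.rank] using this

lemma inj_of_rank_eq_card' {p q : Type*} [Fintype p] [Fintype q] (M : Matrix p q ℝ)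
    (h : M.rank = Fintype.card q) : ∀ v, M *ᵥ v = 0 → v = 0 := by
  have h2 := LinearMap.finrank_range_add_finrank_ker M.mulVecLin
  rw [show Module.finrank ℝ (LinearMap.range M.mulVecLin) = M.rank from rfl, h,
    Module.finrank_pi] at h2
  have hker : Module.finrank ℝ (LinearMap.ker M.mulVecLin) = 0 := by omega
  have hbot : LinearMap.ker M.mulVecLin = ⊥ := Submodule.finrank_eq_zero.mp hker
  intro v hv
  exact (LinearMap.ker_eq_bot'.mp hbot) v hv

lemma sum_dotProduct' {ι : Type*} {q : Type*} [Fintype q] (s : Finset ι)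
    (f : ι → q → ℝ) (w : q → ℝ) : (∑ i ∈ s, f i) ⬝ᵥ w = ∑ i ∈ s, f i ⬝ᵥ w := by
  simp only [dotProduct, Finset.sum_apply, Finset.sum_mul]
  exact Finset.sum_comm

lemma dotProduct_sum' {ι : Type*} {q : Type*} [Fintype q] (s : Finset ι)
    (v : q → ℝ) (f : ι → q → ℝ) : v ⬝ᵥ (∑ i ∈ s, f i) = ∑ i ∈ s, v ⬝ᵥ f i := by
  simp only [dotProduct, Finset.sum_apply, Finset.mul_sum]
  exact Finset.sum_comm

lemma vecMul_sum' {ι : Type*} {p q : Type*} [Fintype p] [Fintype q] (s : Finset ι)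
    (v : p → ℝ) (f : ι → Matrix p q ℝ) : v ᵥ* (∑ i ∈ s, f i) = ∑ i ∈ s, v ᵥ* f i := by
  ext j
  simp only [Matrix.vecMul, dotProduct, Finset.sum_apply, Matrix.sum_apply, Finset.mul_sum]
  exact Finset.sum_comm

lemma vecMul_smulMat {p q : Type*} [Fintype p] [Fintype q] (v : p → ℝ) (c : ℝ)
    (M : Matrix p q ℝ) : v ᵥ* (c • M) = c • (v ᵥ* M) := by
  funext j
  simp only [Matrix.vecMul, dotProduct, Matrix.smul_apply, smul_eq_mul, Pi.smul_apply,
    Finset.mul_sum]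
  exact Finset.sum_congr rfl (fun i _ => by ring)

lemma mulVec_sum' {ι p q : Type*} [Fintype q] (s : Finset ι) (M : Matrix p q ℝ)
    (f : ι → q → ℝ) : M *ᵥ (∑ i ∈ s, f i) = ∑ i ∈ s, M *ᵥ f i :=
  map_sum M.mulVecLin f s

/-- extension of the state sequence to all of `ℕ` (zero beyond `T`). -/
def ext1 {n T : ℕ} (x : Fin (T+1) → Fin n → ℝ) : ℕ → Fin n → ℝ :=
  fun t => if h : t < T + 1 then x ⟨t, h⟩ else 0

/-- extension of the input sequence to all of `ℕ` (zero beyond `T-1`). -/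
def ext2 {m T : ℕ} (u : Fin T → Fin m → ℝ) : ℕ → Fin m → ℝ :=
  fun t => if h : t < T then u ⟨t, h⟩ else 0

lemma dyn {n m T : ℕ} {A : Matrix (Fin n) (Fin n) ℝ} {B : Matrix (Fin n) (Fin m) ℝ}
    {u : Fin T → Fin m → ℝ} {x : Fin (T + 1) → Fin n → ℝ} (hcons : Consistent A B u x) :
    ∀ t, t < T → ext1 x (t+1) = A *ᵥ ext1 x t + B *ᵥ ext2 u t := by
  intro t ht
  have h1 : t + 1 < T + 1 := by omega
  have h2 : t < T + 1 := by omega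
  have := hcons ⟨t, ht⟩
  simp only [ext1, ext2, dif_pos h1, dif_pos h2, dif_pos ht]
  exact this

lemma evol {n m T : ℕ} {A : Matrix (Fin n) (Fin n) ℝ} {B : Matrix (Fin n) (Fin m) ℝ}
    {u : Fin T → Fin m → ℝ} {x : Fin (T + 1) → Fin n → ℝ} (hcons : Consistent A B u x) :
    ∀ k i, i + k ≤ T → ext1 x (i+k) =
      (A ^ k) *ᵥ ext1 x i + ∑ j ∈ range k, ((A ^ (k-1-j)) * B) *ᵥ ext2 u (i+j) := by
  intro k
  induction k with
  | zero => intro i _; simp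
  | succ k ih =>
    intro i hik
    have h1 : i + k < T := by omega
    have h2 : i + (k+1) = (i + k) + 1 := by ring
    rw [h2, dyn hcons _ h1, ih i (by omega)]
    rw [Matrix.mulVec_add, Finset.sum_range_succ]
    have e1 : A *ᵥ ((A ^ k) *ᵥ ext1 x i) = (A ^ (k+1)) *ᵥ ext1 x i := by
      rw [Matrix.mulVec_mulVec, ← pow_succ']
    have e2 : A *ᵥ (∑ j ∈ range k, ((A ^ (k-1-j)) * B) *ᵥ ext2 u (i+j))
        = ∑ j ∈ range k, ((A ^ (k+1-1-j)) * B) *ᵥ ext2 u (i+j) := by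
      rw [mulVec_sum']
      refine Finset.sum_congr rfl (fun j hj => ?_)
      have hj' := Finset.mem_range.mp hj
      have he : k + 1 - 1 - j = (k - 1 - j) + 1 := by omega
      simp only [he, pow_succ', Matrix.mul_assoc, ← Matrix.mulVec_mulVec]
    rw [e1, e2]
    have e3 : ((A ^ (k+1-1-k)) * B) *ᵥ ext2 u (i+k) = B *ᵥ ext2 u (i+k) := by
      simp
    rw [e3]
    abel

/-- the candidate left-kernel coefficient vectors for the Hankel matrix. -/
noncomputable def wvec {n m : ℕ} (A : Matrix (Fin n) (Fin n) ℝ) (B : Matrix (Fin n) (Fin m) ℝ)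
    (eta : Fin n → ℝ) (zeta : Fin m → ℝ) (j : ℕ) : Fin m → ℝ :=
  (∑ k ∈ Finset.Ico (j+1) (n+1), (A.charpoly.coeff k) • (eta ᵥ* (A ^ (k-1-j) * B)))
    + (A.charpoly.coeff j) • zeta

end AuxWillems

/-- Willems et al.: If `(A,B)` is controllable and `u` is persistently
exciting of order `n+1`, then for every state sequence consistent with `(A,B)`,
the stacked matrix `[X₋; U₋]` has rank `n + m`. -/
theorem stmt_3 {n m T : ℕ} (hn : 0 < n) (hm : 0 < m)
    (A : Matrix (Fin n) (Fin n) ℝ) (B : Matrix (Fin n) (Fin m) ℝ)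
    (hcont : Controllable A B)
    (u : Fin T → Fin m → ℝ) (hPE : PE u (n + 1))
    (x : Fin (T + 1) → Fin n → ℝ) (hcons : Consistent A B u x) :
    (stacked (Xminus x) (Uminus u)).rank = n + m := by
  classical
  set c : ℕ → ℝ := fun k => A.charpoly.coeff k with hc
  have hdeg : A.charpoly.natDegree = n := by
    rw [Matrix.charpoly_natDegree_eq_dim, Fintype.card_fin]
  have hcn : A.charpoly.coeff n = 1 := by
    have h1 := (A.charpoly_monic).coeff_natDegree
    rwa [hdeg] at h1
  have hCH : ∑ k ∈ Finset.range (n+1), c k • A ^ k = 0 := by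
    have hd : A.charpoly.natDegree < n + 1 := by omega
    have h1 := Polynomial.aeval_eq_sum_range' hd A
    rw [Matrix.aeval_self_charpoly] at h1
    exact h1.symm
  set M := stacked (Xminus x) (Uminus u) with hMdef
  have hinj : ∀ ξ : (Fin n ⊕ Fin m) → ℝ, Mᵀ *ᵥ ξ = 0 → ξ = 0 := by
    intro ξ hξ
    set η : Fin n → ℝ := fun i => ξ (Sum.inl i) with hη
    set ζ : Fin m → ℝ := fun j => ξ (Sum.inr j) with hζ
    have H0 : ∀ t, t < T → η ⬝ᵥ ext1 x t + ζ ⬝ᵥ ext2 u t = 0 := by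
      intro t ht
      have h := congrFun hξ ⟨t, ht⟩
      have h2 : t < T + 1 := by omega
      simp only [Matrix.mulVec, dotProduct, Matrix.transpose_apply, Pi.zero_apply,
        Fintype.sum_sum_type, hMdef, stacked, Matrix.fromRows, Matrix.of_apply,
        Sum.elim_inl, Sum.elim_inr, Xminus, Uminus] at h
      simp only [dotProduct, ext1, ext2, dif_pos ht, dif_pos h2]
      rw [← h]
      congr 1
      · apply Finset.sum_congr rfl; intro i _
        rw [mul_comm]
        congr 1
      · apply Finset.sum_congr rfl; intro j _
        rw [mul_comm]
        rfl
    -- expansion of dot products along trajectories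
    have hexp : ∀ k i, i + k ≤ T → η ⬝ᵥ ext1 x (i+k)
        = (η ᵥ* A ^ k) ⬝ᵥ ext1 x i
          + ∑ j ∈ Finset.range k, (η ᵥ* (A ^ (k-1-j) * B)) ⬝ᵥ ext2 u (i+j) := by
      intro k i hik
      rw [evol hcons k i hik, dotProduct_add, Matrix.dotProduct_mulVec,
        dotProduct_sum']
      congr 1
      refine Finset.sum_congr rfl (fun j _ => ?_)
      rw [Matrix.dotProduct_mulVec]
    -- the key identity : wvec sequences annihilate shifted inputs
    have key : ∀ i, i + n < T →
        ∑ j ∈ Finset.range (n+1), (wvec A B η ζ j) ⬝ᵥ ext2 u (i+j) = 0 := by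
      intro i hi
      have hzero : ∑ k ∈ Finset.range (n+1),
          c k * (η ⬝ᵥ ext1 x (i+k) + ζ ⬝ᵥ ext2 u (i+k)) = 0 := by
        refine Finset.sum_eq_zero (fun k hk => ?_)
        have hk' := Finset.mem_range.mp hk
        rw [H0 (i+k) (by omega), mul_zero]
      have split : ∀ k ∈ Finset.range (n+1),
          c k * (η ⬝ᵥ ext1 x (i+k) + ζ ⬝ᵥ ext2 u (i+k))
          = (c k • (η ᵥ* A ^ k)) ⬝ᵥ ext1 x i
            + ((∑ j ∈ Finset.range k,
                c k * ((η ᵥ* (A ^ (k-1-j) * B)) ⬝ᵥ ext2 u (i+j)))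
              + c k * (ζ ⬝ᵥ ext2 u (i+k))) := by
        intro k hk
        have hk' := Finset.mem_range.mp hk
        rw [hexp k i (by omega)]
        simp only [smul_dotProduct, smul_eq_mul, ← Finset.mul_sum]
        ring
      rw [Finset.sum_congr rfl split, Finset.sum_add_distrib, Finset.sum_add_distrib,
        ← sum_dotProduct'] at hzero
      have hT1 : (∑ k ∈ Finset.range (n+1), c k • (η ᵥ* A ^ k)) ⬝ᵥ ext1 x i = 0 := by
        have h2 : ∑ k ∈ Finset.range (n+1), c k • (η ᵥ* A ^ k)
            = η ᵥ* (∑ k ∈ Finset.range (n+1), c k • A ^ k) := by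
          rw [vecMul_sum']
          exact Finset.sum_congr rfl (fun k _ => (vecMul_smulMat _ _ _).symm)
        rw [h2, hCH, Matrix.vecMul_zero, zero_dotProduct]
      rw [hT1, zero_add] at hzero
      -- swap the double sum
      have hswap : ∑ k ∈ Finset.range (n+1), ∑ j ∈ Finset.range k,
            c k * ((η ᵥ* (A ^ (k-1-j) * B)) ⬝ᵥ ext2 u (i+j))
          = ∑ j ∈ Finset.range (n+1), ∑ k ∈ Finset.Ico (j+1) (n+1),
            c k * ((η ᵥ* (A ^ (k-1-j) * B)) ⬝ᵥ ext2 u (i+j)) := by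
        simp only [Finset.range_eq_Ico]
        exact (Finset.sum_Ico_Ico_comm' 0 (n+1)
          (fun j k => c k * ((η ᵥ* (A ^ (k-1-j) * B)) ⬝ᵥ ext2 u (i+j)))).symm
      rw [hswap, ← Finset.sum_add_distrib] at hzero
      rw [← hzero]
      refine Finset.sum_congr rfl (fun j _ => ?_)
      rw [wvec, add_dotProduct, sum_dotProduct']
      simp only [smul_dotProduct, smul_eq_mul]
      rfl
    -- wvec is a left null vector of the Hankel matrix
    set w' : (Fin (n+1) × Fin m) → ℝ := fun q => wvec A B η ζ q.1 q.2 with hw'def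
    have hHw : (Hankel u (n+1))ᵀ *ᵥ w' = 0 := by
      funext i
      have hi : (i : ℕ) + n < T := by have := i.isLt; omega
      rw [Matrix.mulVec_transpose]
      have hkey := key i hi
      rw [← Fin.sum_univ_eq_sum_range (fun k => (wvec A B η ζ k) ⬝ᵥ ext2 u (i+k)) (n+1)]
        at hkey
      show (w' ᵥ* Hankel u (n+1)) i = 0
      rw [← hkey]
      simp only [Matrix.vecMul, dotProduct, Fintype.sum_prod_type, Hankel, Matrix.of_apply,
        hw'def]
      refine Finset.sum_congr rfl (fun k _ => ?_)
      refine Finset.sum_congr rfl (fun s _ => ?_)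
      have hik : (i : ℕ) + (k : ℕ) < T := by have := k.isLt; omega
      rw [ext2, dif_pos hik]
    have hw0 : w' = 0 := by
      apply inj_of_rank_eq_card' (Hankel u (n+1))ᵀ _ w' hHw
      rw [Matrix.rank_transpose, hPE]
      simp [Fintype.card_prod]
    have hwj : ∀ j, j < n + 1 → wvec A B η ζ j = 0 := by
      intro j hj
      funext s
      have := congrFun hw0 (⟨j, hj⟩, s)
      simpa [hw'def] using this
    -- ζ = 0
    have hζ0 : ζ = 0 := by
      have h1 := hwj n (by omega)
      rw [wvec, Finset.Ico_self, Finset.sum_empty, zero_add] at h1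
      rw [hcn, one_smul] at h1
      exact h1
    -- η ᵥ* (A^d * B) = 0 for all d < n
    have hAB : ∀ d, d < n → η ᵥ* (A ^ d * B) = 0 := by
      intro d
      induction d using Nat.strong_induction_on with
      | _ d ih =>
        intro hd
        have hj := hwj (n-1-d) (by omega)
        rw [wvec, hζ0, smul_zero, add_zero] at hj
        have hIco : n - 1 - d + 1 = n - d := by omega
        rw [hIco, Finset.sum_Ico_succ_top (show n - d ≤ n by omega)] at hj
        have hlow : ∑ k ∈ Finset.Ico (n-d) n,
            c k • (η ᵥ* (A ^ (k-1-(n-1-d)) * B)) = 0 := by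
          refine Finset.sum_eq_zero (fun k hk => ?_)
          have hk' := Finset.mem_Ico.mp hk
          have he : k - 1 - (n-1-d) = k + d - n := by omega
          rw [he, ih (k + d - n) (by omega) (by omega), smul_zero]
        rw [hlow, zero_add] at hj
        have hexp2 : n - 1 - (n-1-d) = d := by omega
        rw [hexp2] at hj
        rw [hcn, one_smul] at hj
        exact hj
    -- η = 0 via controllability
    have hη0 : η = 0 := by
      have hrank : (reachMat A B)ᵀ.rank = Fintype.card (Fin n) := by
        rw [Matrix.rank_transpose]
        exact hcont.trans (Fintype.card_fin n).symm
      apply inj_of_rank_eq_card' (reachMat A B)ᵀ hrank η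
      rw [Matrix.mulVec_transpose]
      funext q
      have hq : (q.1 : ℕ) < n := q.1.isLt
      have hthis := congrFun (hAB q.1 hq) q.2
      simp only [Matrix.vecMul, dotProduct, reachMat, Matrix.of_apply, Pi.zero_apply] at hthis ⊢
      exact hthis
    funext s
    cases s with
    | inl i => exact congrFun hη0 i
    | inr j => exact congrFun hζ0 j
  have := rank_eq_card_of_inj' Mᵀ hinj
  rw [Matrix.rank_transpose] at this
  simpa [Fintype.card_sum] using this
end

section
/- Suppose Σ_pk ⊆ ℝ^{n×n}×ℝ^{n×m} is open in the Euclidean topology and Σ_pk is not a subset of Σ_cont. Then for every T ∈ ℕ there is no input sequence u(0),…,u(T−1) ∈ ℝ^m that is Σ_pk-universal for identification. -/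
open Matrix

namespace Stmt6Aux


variable {n m : ℕ}

/-- Krylov subspaces. -/
def Kry (A : Matrix (Fin n) (Fin n) ℝ) (B : Matrix (Fin n) (Fin m) ℝ) (j : ℕ) :
    Submodule ℝ (Fin n → ℝ) :=
  ⨆ k : Fin j, LinearMap.range ((A ^ (k : ℕ) * B).mulVecLin)

lemma Kry_mono (A : Matrix (Fin n) (Fin n) ℝ) (B : Matrix (Fin n) (Fin m) ℝ)
    {j j' : ℕ} (h : j ≤ j') : Kry A B j ≤ Kry A B j' :=
  iSup_le fun k => le_iSup_of_le (⟨(k : ℕ), lt_of_lt_of_le k.2 h⟩ : Fin j') le_rfl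


lemma map_range_pow (A : Matrix (Fin n) (Fin n) ℝ) (B : Matrix (Fin n) (Fin m) ℝ) (k : ℕ) :
    Submodule.map A.mulVecLin (LinearMap.range ((A ^ k * B).mulVecLin))
      = LinearMap.range ((A ^ (k + 1) * B).mulVecLin) := by
  have h1 : A ^ (k + 1) * B = A * (A ^ k * B) := by rw [pow_succ', Matrix.mul_assoc]
  rw [h1]
  conv_rhs => rw [Matrix.mulVecLin_mul]
  exact (LinearMap.range_comp ((A ^ k * B).mulVecLin) A.mulVecLin).symm

lemma map_Kry_le (A : Matrix (Fin n) (Fin n) ℝ) (B : Matrix (Fin n) (Fin m) ℝ) (j : ℕ) :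
    (Kry A B j).map A.mulVecLin ≤ Kry A B (j + 1) := by
  rw [Kry, Submodule.map_iSup]
  refine iSup_le fun k => ?_
  rw [map_range_pow A B (k : ℕ)]
  exact le_iSup_of_le (⟨(k : ℕ) + 1, by omega⟩ : Fin (j + 1)) le_rfl

lemma range_pow_le (A : Matrix (Fin n) (Fin n) ℝ) (B : Matrix (Fin n) (Fin m) ℝ)
    {j : ℕ} (h : Kry A B (j + 1) ≤ Kry A B j) (i : ℕ) :
    LinearMap.range ((A ^ (j + i) * B).mulVecLin) ≤ Kry A B j := by
  induction i with
  | zero =>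
    refine le_trans ?_ h
    exact le_iSup_of_le (⟨j, by omega⟩ : Fin (j + 1)) le_rfl
  | succ i ih =>
    rw [show j + (i + 1) = (j + i) + 1 from rfl, ← map_range_pow A B (j + i)]
    exact le_trans (le_trans (Submodule.map_mono ih) (map_Kry_le A B j)) h

lemma Kry_all_le (A : Matrix (Fin n) (Fin n) ℝ) (B : Matrix (Fin n) (Fin m) ℝ)
    {j : ℕ} (h : Kry A B (j + 1) ≤ Kry A B j) (N : ℕ) : Kry A B N ≤ Kry A B j := by
  refine iSup_le fun k => ?_
  rcases lt_or_ge (k : ℕ) j with hk | hk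
  · exact le_iSup_of_le (⟨(k : ℕ), hk⟩ : Fin j) le_rfl
  · have : (k : ℕ) = j + ((k : ℕ) - j) := by omega
    rw [this]
    exact range_pow_le A B h _

lemma exists_stab (A : Matrix (Fin n) (Fin n) ℝ) (B : Matrix (Fin n) (Fin m) ℝ) :
    ∃ j ≤ n, Kry A B (j + 1) ≤ Kry A B j := by
  by_contra hcon
  push_neg at hcon
  have key : ∀ j ≤ n + 1, j ≤ Module.finrank ℝ (Kry A B j) := by
    intro j hj
    induction j with
    | zero => exact Nat.zero_le _
    | succ j ih =>
      have h1 : Kry A B j < Kry A B (j + 1) :=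
        lt_of_le_of_ne (Kry_mono A B (Nat.le_succ j))
          (fun he => hcon j (by omega) (le_of_eq he.symm))
      have h2 := Submodule.finrank_lt_finrank_of_lt h1
      have h3 := ih (by omega)
      omega
  have h4 := key (n + 1) le_rfl
  have h5 : Module.finrank ℝ (Kry A B (n + 1)) ≤ Module.finrank ℝ (Fin n → ℝ) :=
    Submodule.finrank_le _
  rw [Module.finrank_pi] at h5
  simp only [Fintype.card_fin] at h5
  omega

lemma col_in_reach (A : Matrix (Fin n) (Fin n) ℝ) (B : Matrix (Fin n) (Fin m) ℝ)
    (k : Fin n) (w : Fin m → ℝ) :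
    (A ^ (k : ℕ) * B).mulVec w
      = (reachMat A B).mulVec (fun q => if q.1 = k then w q.2 else 0) := by
  funext i
  simp only [Matrix.mulVec, dotProduct, reachMat, Matrix.of_apply, Fintype.sum_prod_type,
    mul_ite, mul_zero]
  rw [Finset.sum_comm]
  simp [Finset.sum_ite_eq']

lemma exists_invariant (hn : 0 < n) (A : Matrix (Fin n) (Fin n) ℝ)
    (B : Matrix (Fin n) (Fin m) ℝ) (hnc : ¬ Controllable A B) :
    ∃ W : Submodule ℝ (Fin n → ℝ), W ≠ ⊤ ∧ (∀ w ∈ W, A.mulVec w ∈ W) ∧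
      ∀ v : Fin m → ℝ, B.mulVec v ∈ W := by
  obtain ⟨j, hjn, hst⟩ := exists_stab A B
  refine ⟨Kry A B n, ?_, ?_, ?_⟩
  · -- proper
    have h1 : Kry A B n ≤ LinearMap.range (reachMat A B).mulVecLin := by
      refine iSup_le fun k => ?_
      rintro y ⟨w, rfl⟩
      exact ⟨fun q => if q.1 = k then w q.2 else 0, (col_in_reach A B k w).symm⟩
    have h2 : (reachMat A B).rank < n :=
      lt_of_le_of_ne (le_trans (Matrix.rank_le_card_height _) (by simp)) hnc
    intro htop
    have h3 : Module.finrank ℝ (Kry A B n) ≤ (reachMat A B).rank :=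
      Submodule.finrank_mono h1
    rw [htop, finrank_top, Module.finrank_pi] at h3
    simp only [Fintype.card_fin] at h3
    omega
  · -- invariant
    intro w hw
    have h1 : A.mulVec w ∈ (Kry A B n).map A.mulVecLin := ⟨w, hw, rfl⟩
    have h2 := le_trans (le_trans (map_Kry_le A B n)
      (Kry_all_le A B hst (n + 1))) (Kry_mono A B hjn)
    exact h2 h1
  · intro v
    have h1 : B.mulVec v ∈ LinearMap.range ((A ^ (0 : ℕ) * B).mulVecLin) := by
      refine ⟨v, ?_⟩
      rw [pow_zero, Matrix.one_mul]; rfl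
    exact le_iSup (fun k : Fin n => LinearMap.range ((A ^ (k : ℕ) * B).mulVecLin)) ⟨0, hn⟩ h1

lemma exists_perp {W : Submodule ℝ (Fin n → ℝ)} (hW : W ≠ ⊤) :
    ∃ w : Fin n → ℝ, w ≠ 0 ∧ ∀ x ∈ W, ∑ j, w j * x j = 0 := by
  obtain ⟨y, hy⟩ : ∃ y, y ∉ W := by
    by_contra h
    push_neg at h
    exact hW (Submodule.eq_top_iff'.mpr h)
  have hy0 : W.mkQ y ≠ 0 := by
    simpa [Submodule.mkQ_apply, Submodule.Quotient.mk_eq_zero] using hy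
  obtain ⟨g, hg⟩ : ∃ g : Module.Dual ℝ ((Fin n → ℝ) ⧸ W), g (W.mkQ y) ≠ 0 := by
    by_contra h
    push_neg at h
    exact hy0 ((Module.forall_dual_apply_eq_zero_iff ℝ _).mp h)
  set f : (Fin n → ℝ) →ₗ[ℝ] ℝ := g ∘ₗ W.mkQ with hf
  have hfx : ∀ x : Fin n → ℝ, f x = ∑ j, x j * f (fun i => if j = i then 1 else 0) := by
    intro x
    conv_lhs => rw [pi_eq_sum_univ x]
    rw [map_sum]
    simp [smul_eq_mul]
  refine ⟨fun j => f (fun i => if j = i then 1 else 0), ?_, ?_⟩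
  · intro h0
    have hz : ∀ x, f x = 0 := by
      intro x
      rw [hfx]
      refine Finset.sum_eq_zero fun j _ => ?_
      rw [congrFun h0 j]
      simp
    exact hg (hz y)
  · intro x hx
    have hfx0 : f x = 0 := by
      simp [hf, Submodule.mkQ_apply, (Submodule.Quotient.mk_eq_zero W).mpr hx]
    have h2 : ∑ j, x j * f (fun i => if j = i then 1 else 0) = 0 :=
      (hfx x).symm.trans hfx0
    exact Eq.trans (Finset.sum_congr rfl fun j _ => mul_comm _ _) h2


end Stmt6Aux

/-- If `Σ_pk` is open and not contained in `Σ_cont`, then for every `T`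
there is no `Σ_pk`-universal input for identification. -/
theorem stmt_6 {n m : ℕ} (hn : 0 < n) (hm : 0 < m)
    (P : Set (Sys n m)) (hP : IsOpen P) (hnc : ¬ P ⊆ SigmaCont n m) :
    ∀ (T : ℕ) (u : Fin T → Fin m → ℝ), ¬ UnivId P u := by
  intro T u hu
  obtain ⟨AB, hABP, hABnc⟩ := Set.not_subset.mp hnc
  obtain ⟨A, B⟩ := AB
  have hnctrl : ¬ Controllable A B := hABnc
  obtain ⟨W, hWtop, hWA, hWB⟩ := Stmt6Aux.exists_invariant hn A B hnctrl
  obtain ⟨w, hw0, hwperp⟩ := Stmt6Aux.exists_perp hWtop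
  -- the perturbation matrix
  set E : Matrix (Fin n) (Fin n) ℝ := Matrix.of (fun _ j => w j) with hE
  have hE0 : E ≠ 0 := by
    intro h
    apply hw0
    funext j
    have := congrFun (congrFun h ⟨0, hn⟩) j
    simpa [hE] using this
  have hEz : ∀ z ∈ W, E.mulVec z = 0 := by
    intro z hz
    funext i
    simpa [hE, Matrix.mulVec, dotProduct] using hwperp z hz
  -- small perturbation stays in P
  have hcont : Continuous (fun ε : ℝ => ((A + ε • E, B) : Sys n m)) := by
    refine Continuous.prodMk ?_ continuous_const
    exact continuous_const.add (continuous_id.smul continuous_const)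
  have hopen : IsOpen ((fun ε : ℝ => ((A + ε • E, B) : Sys n m)) ⁻¹' P) :=
    hP.preimage hcont
  have h0mem : (0 : ℝ) ∈ (fun ε : ℝ => ((A + ε • E, B) : Sys n m)) ⁻¹' P := by
    simpa using hABP
  obtain ⟨δ, hδ, hball⟩ := Metric.isOpen_iff.mp hopen 0 h0mem
  set ε : ℝ := δ / 2 with hεdef
  have hε0 : ε ≠ 0 := by positivity
  have hεP : (A + ε • E, B) ∈ P := by
    apply hball
    simp only [Metric.mem_ball, dist_zero_right, Real.norm_eq_abs, hεdef]
    rw [abs_of_pos (by positivity)]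
    linarith
  -- trajectory with x(0) = 0
  set uext : ℕ → Fin m → ℝ := fun k => if h : k < T then u ⟨k, h⟩ else 0 with huext
  set X : ℕ → (Fin n → ℝ) :=
    fun k => Nat.rec 0 (fun k xk => A.mulVec xk + B.mulVec (uext k)) k with hX
  have hXW : ∀ k, X k ∈ W := by
    intro k
    induction k with
    | zero => exact W.zero_mem
    | succ k ih => exact W.add_mem (hWA _ ih) (hWB _)
  set x : Fin (T + 1) → Fin n → ℝ := fun t => X t.val with hx
  have hcons : Consistent A B u x := by
    intro t
    show X (t.succ.val) = A.mulVec (X t.castSucc.val) + B.mulVec (u t)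
    have h1 : (t.succ : Fin (T + 1)).val = t.val + 1 := rfl
    have h2 : (t.castSucc : Fin (T + 1)).val = t.val := rfl
    rw [h1, h2]
    show A.mulVec (X t.val) + B.mulVec (uext t.val) = _
    congr 1
    rw [huext]
    simp [t.isLt]
  have hcons' : Consistent (A + ε • E) B u x := by
    intro t
    rw [Matrix.add_mulVec, Matrix.smul_mulVec, hEz _ (hXW _), smul_zero, add_zero]
    exact hcons t
  obtain ⟨s, hs⟩ := hu (A, B) hABP x hcons
  have h1 : ((A, B) : Sys n m) ∈ SigmaD u x ∩ P := ⟨hcons, hABP⟩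
  have h2 : ((A + ε • E, B) : Sys n m) ∈ SigmaD u x ∩ P := ⟨hcons', hεP⟩
  rw [hs] at h1 h2
  have h3 : A + ε • E = A := congrArg Prod.fst (h2.trans h1.symm)
  have h4 : ε • E = 0 := by
    have := congrArg (fun M => M - A) h3
    simpa [add_sub_cancel_left] using this
  rcases smul_eq_zero.mp h4 with h | h
  · exact hε0 h
  · exact hE0 h
end

section
/- Let Σ_pk ⊆ ℝ^{n×n}×ℝ^{n×m} be open in the Euclidean topology. Then there exist T ∈ ℕ and an input sequence u(0),…,u(T−1) ∈ ℝ^m that is Σ_pk-universal for identification if and only if Σ_pk ⊆ Σ_cont. -/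
open Matrix

/-- Aux: a linear functional vanishing on `A^0, …, A^{n-1}` vanishes on all powers. -/
lemma aux_pow_extend {n : ℕ} (hn : 0 < n) (A : Matrix (Fin n) (Fin n) ℝ)
    (L : Matrix (Fin n) (Fin n) ℝ →ₗ[ℝ] ℝ) (h : ∀ i : Fin n, L (A ^ (i : ℕ)) = 0) (k : ℕ) :
    L (A ^ k) = 0 := by
  rw [Matrix.pow_eq_aeval_mod_charpoly]
  set q := Polynomial.X ^ k %ₘ A.charpoly with hq
  have hdeg : q.natDegree < n := by
    have h1 : q.degree < A.charpoly.degree := Polynomial.degree_modByMonic_lt _ A.charpoly_monic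
    rw [Matrix.charpoly_degree_eq_dim, Fintype.card_fin] at h1
    rcases eq_or_ne q 0 with h0 | h0
    · simpa [h0] using hn
    · exact (Polynomial.natDegree_lt_iff_degree_lt h0).2 h1
  rw [Polynomial.aeval_eq_sum_range' hdeg, map_sum]
  refine Finset.sum_eq_zero fun i hi => ?_
  rw [Finset.mem_range] at hi
  rw [LinearMap.map_smul, h ⟨i, hi⟩, smul_zero]

/-- The linear functional `M ↦ a ⬝ᵥ (M *ᵥ w)`. -/
noncomputable def vecMulL {n p : ℕ} (a : Fin n → ℝ) (w : Fin p → ℝ) :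
    Matrix (Fin n) (Fin p) ℝ →ₗ[ℝ] ℝ where
  toFun M := a ⬝ᵥ (M *ᵥ w)
  map_add' M N := by rw [Matrix.add_mulVec, dotProduct_add]
  map_smul' c M := by
    simp only [Matrix.smul_mulVec, dotProduct_smul, smul_eq_mul, RingHom.id_apply]

lemma aux_ext_dot {n : ℕ} (hn : 0 < n) (A : Matrix (Fin n) (Fin n) ℝ)
    (a w : Fin n → ℝ) (h : ∀ i : Fin n, Matrix.vecMul a (A ^ (i : ℕ)) ⬝ᵥ w = 0) (k : ℕ) :
    Matrix.vecMul a (A ^ k) ⬝ᵥ w = 0 := by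
  rw [← Matrix.dotProduct_mulVec]
  exact aux_pow_extend hn A (vecMulL a w) (fun i => by
    simpa [vecMulL, ← Matrix.dotProduct_mulVec] using h i) k

lemma aux_left_ker_eq_zero {n : ℕ} {q : Type*} [Fintype q] (M : Matrix (Fin n) q ℝ)
    (hr : M.rank = n) {a : Fin n → ℝ} (ha : Matrix.vecMul a M = 0) : a = 0 := by
  have h1 : (Mᵀ).rank = n := by rw [Matrix.rank_transpose, hr]
  have h2 : a ∈ LinearMap.ker (Mᵀ).mulVecLin := by
    rw [LinearMap.mem_ker, Matrix.mulVecLin_apply, Matrix.mulVec_transpose, ha]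
  have h3 := LinearMap.finrank_range_add_finrank_ker (Mᵀ).mulVecLin
  rw [Module.finrank_pi, Fintype.card_fin] at h3
  have h4 : Module.finrank ℝ (LinearMap.ker (Mᵀ).mulVecLin) = 0 := by
    have : Module.finrank ℝ (LinearMap.range (Mᵀ).mulVecLin) = n := h1
    omega
  rw [Submodule.finrank_eq_zero] at h4
  rw [h4, Submodule.mem_bot] at h2
  exact h2

lemma aux_left_ker_pos {n : ℕ} {q : Type*} [Fintype q] (M : Matrix (Fin n) q ℝ)
    (hr : M.rank < n) : ∃ a : Fin n → ℝ, a ≠ 0 ∧ Matrix.vecMul a M = 0 := by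
  have h1 : (Mᵀ).rank < n := by rw [Matrix.rank_transpose]; exact hr
  have h3 := LinearMap.finrank_range_add_finrank_ker (Mᵀ).mulVecLin
  rw [Module.finrank_pi, Fintype.card_fin] at h3
  have h4 : Module.finrank ℝ (LinearMap.ker (Mᵀ).mulVecLin) ≠ 0 := by
    have : Module.finrank ℝ (LinearMap.range (Mᵀ).mulVecLin) < n := h1
    omega
  rw [Ne, Submodule.finrank_eq_zero, Submodule.eq_bot_iff] at h4
  push_neg at h4
  obtain ⟨a, haker, ha0⟩ := h4
  refine ⟨a, ha0, ?_⟩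
  rw [LinearMap.mem_ker, Matrix.mulVecLin_apply, Matrix.mulVec_transpose] at haker
  exact haker

lemma aux_vecMul_reach {n m : ℕ} (A : Matrix (Fin n) (Fin n) ℝ) (B : Matrix (Fin n) (Fin m) ℝ)
    (a : Fin n → ℝ) (k : Fin n) (j : Fin m) :
    Matrix.vecMul a (reachMat A B) (k, j) = Matrix.vecMul a (A ^ (k : ℕ) * B) j := by
  simp [Matrix.vecMul, dotProduct, reachMat]

lemma aux_vecMul_col {n p : ℕ} (v : Fin n → ℝ) (B : Matrix (Fin n) (Fin p) ℝ) (j : Fin p) :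
    Matrix.vecMul v B j = v ⬝ᵥ (fun i => B i j) := rfl
/-- Core lemma: with the impulse input, any `(a, b)` annihilating the trajectory of a
controllable system is zero. -/
lemma aux_core {n m : ℕ} (hn : 0 < n) (hm : 0 < m) (A : Matrix (Fin n) (Fin n) ℝ)
    (B : Matrix (Fin n) (Fin m) ℝ) (hC : Controllable A B)
    (X : ℕ → Fin n → ℝ) (U : ℕ → Fin m → ℝ)
    (hstep : ∀ t, t < n + m * (n + 2) → X (t + 1) = A.mulVec (X t) + B.mulVec (U t))
    (hU : ∀ t, t < n + m * (n + 2) → ∀ j : Fin m,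
      U t j = if t = n + (j : ℕ) * (n + 2) then 1 else 0)
    (a : Fin n → ℝ) (b : Fin m → ℝ)
    (hann : ∀ t, t < n + m * (n + 2) → a ⬝ᵥ X t + b ⬝ᵥ U t = 0) :
    a = 0 ∧ b = 0 := by
  set T := n + m * (n + 2) with hT
  -- basic arithmetic about impulse times
  have hs_lt : ∀ j : ℕ, j < m → n + j * (n + 2) + n + 1 < T := by
    intro j hj
    have h1 : (j + 1) * (n + 2) ≤ m * (n + 2) := Nat.mul_le_mul_right _ (by omega)
    have h2 : (j + 1) * (n + 2) = j * (n + 2) + (n + 2) := by ring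
    omega
  have hnT : n < T := by have := hs_lt 0 hm; omega
  -- characterization of zero inputs
  have hU0 : ∀ t, t < T → (∀ j : Fin m, t ≠ n + (j : ℕ) * (n + 2)) → U t = 0 := by
    intro t ht h
    funext j
    rw [hU t ht j, if_neg (h j)]
    rfl
  have hUimp : ∀ j : Fin m, U (n + (j : ℕ) * (n + 2)) = Pi.single j 1 := by
    intro j
    funext j'
    have hlt : n + (j : ℕ) * (n + 2) < T := by have := hs_lt j j.isLt; omega
    rw [hU _ hlt j', Pi.single_apply]
    by_cases h : j' = j
    · subst h; simp
    · rw [if_neg, if_neg h]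
      intro heq
      apply h
      apply Fin.ext
      have h2 : (j' : ℕ) * (n + 2) = (j : ℕ) * (n + 2) := by omega
      exact Nat.eq_of_mul_eq_mul_right (by omega) h2
  -- times strictly between impulses are not impulse times
  have hni : ∀ j : ℕ, j < m → ∀ r, 1 ≤ r → r ≤ n + 1 → ∀ j' : Fin m,
      n + j * (n + 2) + r ≠ n + (j' : ℕ) * (n + 2) := by
    intro j hj r h1 h2 j' heq
    rcases le_or_gt (j' : ℕ) j with h | h
    · have hle : (j' : ℕ) * (n + 2) ≤ j * (n + 2) := Nat.mul_le_mul_right _ h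
      omega
    · have hle : (j + 1) * (n + 2) ≤ (j' : ℕ) * (n + 2) := Nat.mul_le_mul_right _ h
      have he : (j + 1) * (n + 2) = j * (n + 2) + (n + 2) := by ring
      omega
  -- zeros after impulse j
  have hz : ∀ j : ℕ, j < m → ∀ q, q < n + 1 →
      n + j * (n + 2) + 1 + q < T ∧ U (n + j * (n + 2) + 1 + q) = 0 := by
    intro j hj q hq
    have h1 := hs_lt j hj
    refine ⟨by omega, hU0 _ (by omega) ?_⟩
    intro j' heq
    exact hni j hj (1 + q) (by omega) (by omega) j' (by omega)
  -- free run
  have hfree : ∀ t0 r, (∀ q, q < r → t0 + q < T ∧ U (t0 + q) = 0) →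
      X (t0 + r) = (A ^ r).mulVec (X t0) := by
    intro t0 r
    induction r with
    | zero => intro _; simp
    | succ r ih =>
      intro h
      have h1 := ih fun q hq => h q (by omega)
      have h2 := h r (by omega)
      have h3 : t0 + (r + 1) = (t0 + r) + 1 := by omega
      rw [h3, hstep _ h2.1, h1, h2.2, Matrix.mulVec_zero, add_zero,
        Matrix.mulVec_mulVec, ← pow_succ']
  -- non-impulse annihilation
  have hdz : ∀ t, t < T → (∀ j : Fin m, t ≠ n + (j : ℕ) * (n + 2)) → a ⬝ᵥ X t = 0 := by
    intro t ht h
    have := hann t ht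
    rw [hU0 t ht h, dotProduct_zero, add_zero] at this
    exact this
  -- transfer of the invariant along a free run
  have htrans : ∀ t0 r, (∀ q, q < r → t0 + q < T ∧ U (t0 + q) = 0) →
      (∀ k, Matrix.vecMul a (A ^ k) ⬝ᵥ X t0 = 0) →
      ∀ k, Matrix.vecMul a (A ^ k) ⬝ᵥ X (t0 + r) = 0 := by
    intro t0 r h hQ k
    rw [hfree t0 r h, Matrix.dotProduct_mulVec, Matrix.vecMul_vecMul, ← pow_add]
    exact hQ (k + r)
  -- invariant at time 0
  have hQ0 : ∀ k, Matrix.vecMul a (A ^ k) ⬝ᵥ X 0 = 0 := by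
    apply aux_ext_dot hn
    intro i
    have hiz : ∀ q, q < (i : ℕ) → 0 + q < T ∧ U (0 + q) = 0 := by
      intro q hq
      have hqn : q < n := by omega
      refine ⟨by omega, hU0 _ (by omega) ?_⟩
      intro j heq
      have : n ≤ (0 : ℕ) + q := by omega
      omega
    have hXi := hfree 0 i hiz
    have hd : a ⬝ᵥ X (0 + (i : ℕ)) = 0 := by
      apply hdz _ (by omega)
      intro j heq
      have : n ≤ (0 : ℕ) + (i : ℕ) := by omega
      have := i.isLt
      omega
    rw [hXi, Matrix.dotProduct_mulVec] at hd
    exact hd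
  -- invariant at time n (= first impulse time)
  have hQn : ∀ k, Matrix.vecMul a (A ^ k) ⬝ᵥ X n = 0 := by
    intro k
    have hiz : ∀ q, q < n → 0 + q < T ∧ U (0 + q) = 0 := by
      intro q hq
      refine ⟨by omega, hU0 _ (by omega) ?_⟩
      intro j heq
      omega
    have := htrans 0 n hiz hQ0 k
    simpa using this
  -- invariant propagates past each impulse
  have stepQ : ∀ j : ℕ, j < m →
      (∀ k, Matrix.vecMul a (A ^ k) ⬝ᵥ X (n + j * (n + 2)) = 0) →
      ∀ k, Matrix.vecMul a (A ^ k) ⬝ᵥ X (n + j * (n + 2) + 1) = 0 := by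
    intro j hj _
    apply aux_ext_dot hn
    intro i
    have hfr := hfree (n + j * (n + 2) + 1) i fun q hq => hz j hj q (by omega)
    have hd : a ⬝ᵥ X (n + j * (n + 2) + 1 + (i : ℕ)) = 0 := by
      apply hdz _ (by have := hs_lt j hj; have := i.isLt; omega)
      intro j' heq
      exact hni j hj (1 + (i : ℕ)) (by omega) (by have := i.isLt; omega) j' (by omega)
    rw [hfr, Matrix.dotProduct_mulVec] at hd
    exact hd
  -- the invariant holds at every impulse time
  have main : ∀ j : ℕ, j < m →
      ∀ k, Matrix.vecMul a (A ^ k) ⬝ᵥ X (n + j * (n + 2)) = 0 := by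
    intro j
    induction j with
    | zero => intro _ k; simpa using hQn k
    | succ j ih =>
      intro hj
      have hjm : j < m := by omega
      have hQ1 := stepQ j hjm (ih hjm)
      have ht := htrans (n + j * (n + 2) + 1) (n + 1) (fun q hq => hz j hjm q hq) hQ1
      intro k
      have harith : n + j * (n + 2) + 1 + (n + 1) = n + (j + 1) * (n + 2) := by ring
      rw [← harith]
      exact ht k
  -- key consequence: a annihilates A^k B for every k
  have hkey : ∀ (j : Fin m) (k : ℕ), Matrix.vecMul a (A ^ k * B) j = 0 := by
    intro j k
    have hj : (j : ℕ) < m := j.isLt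
    have hQj := main j hj
    have hQj1 := stepQ j hj hQj
    have hx1 : X (n + (j : ℕ) * (n + 2) + 1)
        = A.mulVec (X (n + (j : ℕ) * (n + 2))) + B.mulVec (Pi.single j 1) := by
      rw [hstep _ (by have := hs_lt j hj; omega), hUimp j]
    have h0 := hQj1 k
    rw [hx1, dotProduct_add] at h0
    have e1 : Matrix.vecMul a (A ^ k) ⬝ᵥ A.mulVec (X (n + (j : ℕ) * (n + 2)))
        = Matrix.vecMul a (A ^ (k + 1)) ⬝ᵥ X (n + (j : ℕ) * (n + 2)) := by
      rw [Matrix.dotProduct_mulVec, Matrix.vecMul_vecMul, ← pow_succ]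
    have e2 : Matrix.vecMul a (A ^ k) ⬝ᵥ B.mulVec (Pi.single j 1)
        = Matrix.vecMul a (A ^ k * B) j := by
      rw [Matrix.dotProduct_mulVec, Matrix.vecMul_vecMul, dotProduct_single, mul_one]
    rw [e1, e2, hQj (k + 1), zero_add] at h0
    exact h0
  constructor
  · apply aux_left_ker_eq_zero (reachMat A B) hC
    funext q
    obtain ⟨k, j⟩ := q
    rw [aux_vecMul_reach]
    exact hkey j k
  · funext j
    have hj : (j : ℕ) < m := j.isLt
    have h1 := hann (n + (j : ℕ) * (n + 2)) (by have := hs_lt j hj; omega)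
    rw [hUimp j, dotProduct_single, mul_one] at h1
    have h2 := main j hj 0
    rw [pow_zero, Matrix.vecMul_one] at h2
    rw [h2, zero_add] at h1
    exact h1
/-- The impulse input sequence. -/
def impulseInput (n m : ℕ) : Fin (n + m * (n + 2)) → Fin m → ℝ :=
  fun t j => if (t : ℕ) = n + (j : ℕ) * (n + 2) then 1 else 0

/-- Identification from impulse data for controllable systems. -/
lemma aux_ident {n m : ℕ} (hn : 0 < n) (hm : 0 < m)
    (A : Matrix (Fin n) (Fin n) ℝ) (B : Matrix (Fin n) (Fin m) ℝ)
    (hCab : Controllable A B)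
    (A' : Matrix (Fin n) (Fin n) ℝ) (B' : Matrix (Fin n) (Fin m) ℝ)
    (xd : Fin (n + m * (n + 2) + 1) → Fin n → ℝ)
    (hcons : Consistent A B (impulseInput n m) xd)
    (hcons' : Consistent A' B' (impulseInput n m) xd) :
    A' = A ∧ B' = B := by
  set X : ℕ → Fin n → ℝ :=
    fun t => if h : t < n + m * (n + 2) + 1 then xd ⟨t, h⟩ else 0 with hXdef
  set U : ℕ → Fin m → ℝ :=
    fun t => if h : t < n + m * (n + 2) then impulseInput n m ⟨t, h⟩ else 0 with hUdef
  have hXt : ∀ t (h : t < n + m * (n + 2) + 1), X t = xd ⟨t, h⟩ := by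
    intro t h; rw [hXdef]; simp [h]
  have hUt : ∀ t, t < n + m * (n + 2) → ∀ j : Fin m,
      U t j = if t = n + (j : ℕ) * (n + 2) then 1 else 0 := by
    intro t ht j; rw [hUdef]; simp only [ht, dif_pos]; rfl
  have hstep : ∀ (A₀ : Matrix (Fin n) (Fin n) ℝ) (B₀ : Matrix (Fin n) (Fin m) ℝ),
      Consistent A₀ B₀ (impulseInput n m) xd →
      ∀ t, t < n + m * (n + 2) → X (t + 1) = A₀.mulVec (X t) + B₀.mulVec (U t) := by
    intro A₀ B₀ hc t ht
    have hthis := hc ⟨t, ht⟩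
    have hUeq : U t = impulseInput n m ⟨t, ht⟩ := by
      rw [hUdef]; simp [ht]
    rw [hXt (t + 1) (by omega), hXt t (by omega), hUeq]
    exact hthis
  have key : ∀ i : Fin n, (fun p => A' i p - A i p) = 0 ∧ (fun p => B' i p - B i p) = 0 := by
    intro i
    apply aux_core hn hm A B hCab X U (hstep A B hcons) hUt
    intro t ht
    have h1 := hstep A B hcons t ht
    have h2 := hstep A' B' hcons' t ht
    have h3 : A.mulVec (X t) + B.mulVec (U t) = A'.mulVec (X t) + B'.mulVec (U t) :=
      h1.symm.trans h2
    have h4 := congrFun h3 i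
    show ((fun p => A' i p - A i p) ⬝ᵥ X t) + ((fun p => B' i p - B i p) ⬝ᵥ U t) = 0
    have e1 : (fun p => A' i p - A i p) ⬝ᵥ X t = A' i ⬝ᵥ X t - A i ⬝ᵥ X t := by
      rw [← sub_dotProduct]; rfl
    have e2 : (fun p => B' i p - B i p) ⬝ᵥ U t = B' i ⬝ᵥ U t - B i ⬝ᵥ U t := by
      rw [← sub_dotProduct]; rfl
    have h5 : A i ⬝ᵥ X t + B i ⬝ᵥ U t = A' i ⬝ᵥ X t + B' i ⬝ᵥ U t := by
      exact h4
    rw [e1, e2]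
    linarith
  constructor
  · funext i p
    have := congrFun (key i).1 p
    simp only [Pi.zero_apply] at this
    linarith
  · funext i p
    have := congrFun (key i).2 p
    simp only [Pi.zero_apply] at this
    linarith

set_option maxHeartbeats 2000000 in
/-- For open `Σ_pk`, there exists a `Σ_pk`-universal input for
identification (of some length `T`) iff `Σ_pk ⊆ Σ_cont`. -/
theorem stmt_7 {n m : ℕ} (hn : 0 < n) (hm : 0 < m)
    (P : Set (Sys n m)) (hP : IsOpen P) :
    (∃ (T : ℕ) (u : Fin T → Fin m → ℝ), UnivId P u) ↔ P ⊆ SigmaCont n m := by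
  constructor
  · -- necessity
    rintro ⟨T, u, hu⟩ ⟨A, B⟩ hABP
    by_contra hnc
    have hnc' : ¬ Controllable A B := hnc
    have hrank : (reachMat A B).rank < n := by
      have h1 : (reachMat A B).rank ≤ n := by
        have := Matrix.rank_le_card_height (reachMat A B)
        simpa using this
      exact lt_of_le_of_ne h1 hnc'
    obtain ⟨a, ha0, haR⟩ := aux_left_ker_pos _ hrank
    -- a annihilates A^k * B for all k
    have hreach : ∀ (k : ℕ) (j : Fin m), Matrix.vecMul a (A ^ k * B) j = 0 := by
      intro k j
      have base : ∀ i : Fin n, Matrix.vecMul a (A ^ (i : ℕ)) ⬝ᵥ (fun p => B p j) = 0 := by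
        intro i
        have h1 := congrFun haR (i, j)
        rw [aux_vecMul_reach] at h1
        rw [← aux_vecMul_col, Matrix.vecMul_vecMul]
        exact h1.trans rfl
      have h2 := aux_ext_dot hn A a _ base k
      rw [← aux_vecMul_col, Matrix.vecMul_vecMul] at h2
      exact h2
    -- trajectory from 0
    set U : ℕ → Fin m → ℝ := fun t => if h : t < T then u ⟨t, h⟩ else 0 with hUdef
    set X : ℕ → Fin n → ℝ :=
      fun t => Nat.rec 0 (fun t xt => A.mulVec xt + B.mulVec (U t)) t with hXdef
    have hXs : ∀ t, X (t + 1) = A.mulVec (X t) + B.mulVec (U t) := fun t => rfl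
    have hQ : ∀ t k, Matrix.vecMul a (A ^ k) ⬝ᵥ X t = 0 := by
      intro t
      induction t with
      | zero => intro k; simp [hXdef]
      | succ t ih =>
        intro k
        rw [hXs t, dotProduct_add]
        have e1 : Matrix.vecMul a (A ^ k) ⬝ᵥ A.mulVec (X t)
            = Matrix.vecMul a (A ^ (k + 1)) ⬝ᵥ X t := by
          rw [Matrix.dotProduct_mulVec, Matrix.vecMul_vecMul, ← pow_succ]
        have e2 : Matrix.vecMul a (A ^ k) ⬝ᵥ B.mulVec (U t)
            = Matrix.vecMul a (A ^ k * B) ⬝ᵥ U t := by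
          rw [Matrix.dotProduct_mulVec, Matrix.vecMul_vecMul]
        have e3 : Matrix.vecMul a (A ^ k * B) = 0 := funext fun j => hreach k j
        rw [e1, e2, e3, ih (k + 1), zero_dotProduct, add_zero]
    have haX : ∀ t, a ⬝ᵥ X t = 0 := by
      intro t
      have := hQ t 0
      rwa [pow_zero, Matrix.vecMul_one] at this
    -- the trajectory as data
    set x : Fin (T + 1) → Fin n → ℝ := fun t => X t.val with hxdef
    have hconsA : Consistent A B u x := by
      intro t
      show X (t.val + 1) = A.mulVec (X t.val) + B.mulVec (u t)
      rw [hXs t.val]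
      congr 1
      congr 1
      simp [hUdef, t.isLt]
    -- perturbation
    obtain ⟨j0, hj0⟩ := Function.ne_iff.mp ha0
    set i0 : Fin n := ⟨0, hn⟩ with hi0
    set E : Matrix (Fin n) (Fin n) ℝ :=
      Matrix.of fun i j => (if i = i0 then (1 : ℝ) else 0) * a j with hEdef
    have hE : ∀ (ε : ℝ) (v : Fin n → ℝ), a ⬝ᵥ v = 0 → (A + ε • E).mulVec v = A.mulVec v := by
      intro ε v hv
      rw [Matrix.add_mulVec]
      convert add_zero _ using 2
      funext i
      show (∑ j, (ε • E) i j * v j) = 0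
      have : ∀ j, (ε • E) i j * v j
          = (ε * (if i = i0 then (1 : ℝ) else 0)) * (a j * v j) := by
        intro j
        show ε * ((if i = i0 then (1 : ℝ) else 0) * a j) * v j = _
        ring
      rw [Finset.sum_congr rfl fun j _ => this j, ← Finset.mul_sum]
      have : (∑ j, a j * v j) = 0 := hv
      rw [this, mul_zero]
    -- find a nonzero ε with the perturbed system in P
    have hcont : Continuous fun ε : ℝ => ((A + ε • E, B) : Sys n m) := by
      apply Continuous.prodMk
      · exact continuous_const.add (continuous_id.smul continuous_const)
      · exact continuous_const
    have hopen : IsOpen ((fun ε : ℝ => ((A + ε • E, B) : Sys n m)) ⁻¹' P) := hP.preimage hcont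
    have h0mem : (0 : ℝ) ∈ (fun ε : ℝ => ((A + ε • E, B) : Sys n m)) ⁻¹' P := by
      show ((A + (0 : ℝ) • E, B) : Sys n m) ∈ P
      simpa using hABP
    rw [Metric.isOpen_iff] at hopen
    obtain ⟨δ, hδ, hball⟩ := hopen 0 h0mem
    set ε : ℝ := δ / 2 with hεdef
    have hε0 : ε ≠ 0 := by
      have : (0 : ℝ) < ε := by rw [hεdef]; linarith
      exact ne_of_gt this
    have hεmem : ((A + ε • E, B) : Sys n m) ∈ P := by
      apply hball
      rw [Metric.mem_ball, Real.dist_eq, sub_zero, hεdef, abs_of_pos (by linarith)]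
      linarith
    -- the perturbed system is consistent with the same data
    have hconsE : Consistent (A + ε • E) B u x := by
      intro t
      rw [hE ε (x t.castSucc) (haX t.val)]
      exact hconsA t
    -- contradiction with informativity
    obtain ⟨s0, hs0⟩ := hu (A, B) hABP x hconsA
    have hm1 : ((A, B) : Sys n m) ∈ SigmaD u x ∩ P := ⟨hconsA, hABP⟩
    have hm2 : ((A + ε • E, B) : Sys n m) ∈ SigmaD u x ∩ P := ⟨hconsE, hεmem⟩
    rw [hs0, Set.mem_singleton_iff] at hm1 hm2
    have hAA : A = A + ε • E := congrArg Prod.fst (hm1.trans hm2.symm)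
    have hEz : ε • E = 0 := left_eq_add.mp hAA
    have hval := congrFun (congrFun hEz i0) j0
    have hval2 : ε * a j0 = 0 := by
      have h8 : (ε • E) i0 j0 = ε * a j0 := by
        show ε * ((if i0 = i0 then (1 : ℝ) else 0) * a j0) = ε * a j0
        rw [if_pos rfl, one_mul]
      rw [h8] at hval
      exact hval.trans rfl
    rcases mul_eq_zero.mp hval2 with h | h
    · exact hε0 h
    · exact hj0 (h.trans rfl)
  · -- sufficiency
    intro hPC
    refine ⟨n + m * (n + 2), impulseInput n m, ?_⟩
    rintro ⟨A, B⟩ hABP xd hcons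
    refine ⟨(A, B), ?_⟩
    apply Set.eq_singleton_iff_unique_mem.2
    refine ⟨⟨hcons, hABP⟩, ?_⟩
    rintro ⟨A', B'⟩ ⟨hcons', hABP'⟩
    have hCab : Controllable A B := by
      have h9 : ((A, B) : Sys n m) ∈ SigmaCont n m := hPC hABP
      exact h9
    obtain ⟨hA, hB⟩ := aux_ident hn hm A B hCab A' B' xd hcons hcons'
    rw [hA, hB]
end

section
/- For every T ∈ ℕ there is no input sequence u(0),…,u(T−1) ∈ ℝ^m that is Σ_stab-universal for identification. -/
open Matrix

lemma schur_smul_one {n : ℕ} (hn : 0 < n) (c : ℝ) (hc : |c| < 1) :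
    Schur (c • (1 : Matrix (Fin n) (Fin n) ℝ)) := by
  intro μ hμ
  have hmap : (c • (1 : Matrix (Fin n) (Fin n) ℝ)).map ((↑·) : ℝ → ℂ)
      = algebraMap ℂ (Matrix (Fin n) (Fin n) ℂ) (c : ℂ) := by
    ext i j
    simp [Matrix.map_apply, Matrix.smul_apply, Matrix.one_apply, Matrix.algebraMap_matrix_apply]
    split <;> simp
  rw [hmap, spectrum.mem_iff, ← map_sub] at hμ
  have hμc : μ = (c : ℂ) := by
    by_contra hne
    exact hμ (((sub_ne_zero.mpr hne).isUnit).map (algebraMap ℂ (Matrix (Fin n) (Fin n) ℂ)))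
  subst hμc
  simpa using hc

/-- There are no `Σ_stab`-universal inputs for identification. -/
theorem stmt_8 {n m : ℕ} (hn : 0 < n) (hm : 0 < m) :
    ∀ (T : ℕ) (u : Fin T → Fin m → ℝ), ¬ UnivId (SigmaStab n m) u := by
  intro T u h
  have hcons0 : Consistent (0 : Matrix (Fin n) (Fin n) ℝ) (0 : Matrix (Fin n) (Fin m) ℝ) u
      (fun _ _ => 0) := by
    intro t
    show (0 : Fin n → ℝ) = (0 : Matrix (Fin n) (Fin n) ℝ) *ᵥ (0 : Fin n → ℝ)
      + (0 : Matrix (Fin n) (Fin m) ℝ) *ᵥ u t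
    simp
  have hconsh : Consistent ((1/2 : ℝ) • (1 : Matrix (Fin n) (Fin n) ℝ))
      (0 : Matrix (Fin n) (Fin m) ℝ) u (fun _ _ => 0) := by
    intro t
    show (0 : Fin n → ℝ) = ((1/2 : ℝ) • (1 : Matrix (Fin n) (Fin n) ℝ)) *ᵥ (0 : Fin n → ℝ)
      + (0 : Matrix (Fin n) (Fin m) ℝ) *ᵥ u t
    simp
  have hstab0 : ((0 : Matrix (Fin n) (Fin n) ℝ), (0 : Matrix (Fin n) (Fin m) ℝ)) ∈ SigmaStab n m := by
    refine ⟨0, ?_⟩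
    have h0 : ((0, 0) : Sys n m).1 + ((0, 0) : Sys n m).2 * (0 : Matrix (Fin m) (Fin n) ℝ)
        = (0 : ℝ) • (1 : Matrix (Fin n) (Fin n) ℝ) := by simp
    rw [h0]
    exact schur_smul_one hn 0 (by norm_num)
  have hstabh : (((1/2 : ℝ) • (1 : Matrix (Fin n) (Fin n) ℝ)), (0 : Matrix (Fin n) (Fin m) ℝ)) ∈ SigmaStab n m := by
    refine ⟨0, ?_⟩
    have h0 : (((1/2 : ℝ) • (1 : Matrix (Fin n) (Fin n) ℝ), (0 : Matrix (Fin n) (Fin m) ℝ)) : Sys n m).1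
        + (((1/2 : ℝ) • (1 : Matrix (Fin n) (Fin n) ℝ), (0 : Matrix (Fin n) (Fin m) ℝ)) : Sys n m).2 * (0 : Matrix (Fin m) (Fin n) ℝ)
        = (1/2 : ℝ) • (1 : Matrix (Fin n) (Fin n) ℝ) := by simp
    rw [h0]
    exact schur_smul_one hn (1/2) (by rw [abs_of_nonneg] <;> norm_num)
  obtain ⟨s, hs⟩ := h (0, 0) hstab0 (fun _ _ => 0) hcons0
  have h0 : ((0 : Matrix (Fin n) (Fin n) ℝ), (0 : Matrix (Fin n) (Fin m) ℝ)) ∈ ({s} : Set (Sys n m)) := by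
    rw [← hs]; exact ⟨hcons0, hstab0⟩
  have hh : (((1/2 : ℝ) • (1 : Matrix (Fin n) (Fin n) ℝ)), (0 : Matrix (Fin n) (Fin m) ℝ)) ∈ ({s} : Set (Sys n m)) := by
    rw [← hs]; exact ⟨hconsh, hstabh⟩
  rw [Set.mem_singleton_iff] at h0 hh
  have heq : (0 : Matrix (Fin n) (Fin n) ℝ) = (1/2 : ℝ) • (1 : Matrix (Fin n) (Fin n) ℝ) :=
    congrArg Prod.fst (h0.trans hh.symm)
  have h1 := congrFun (congrFun heq ⟨0, hn⟩) ⟨0, hn⟩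
  simp [Matrix.smul_apply, Matrix.one_apply] at h1
end

section
/- Let D be input-state data of length T consistent with some system (A_true,B_true). Then D is M-informative for stabilization if and only if X_- has full row rank n and there exists a right inverse X_-† ∈ ℝ^{T×n} of X_- (i.e., X_- X_-† = I_n) such that X_+ X_-† is Schur. -/
open Matrix

section Aux

open Polynomial in
/-- A Schur matrix has trace of absolute value at most `n`. -/
lemma schur_abs_trace_le {n : ℕ} {M : Matrix (Fin n) (Fin n) ℝ} (h : Schur M) :
    |M.trace| ≤ (n : ℝ) := by
  classical
  set Mc := M.map ((↑·) : ℝ → ℂ) with hMcdef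
  have htr : Mc.trace = (M.trace : ℂ) := by
    simp [Matrix.trace, Matrix.diag, hMcdef, Matrix.map_apply]
  have hdeg : Mc.charpoly.natDegree = n := by
    simp [Matrix.charpoly_natDegree_eq_dim]
  have hcard : Mc.charpoly.roots.card = n := by
    have := Polynomial.splits_iff_card_roots.mp
      (IsAlgClosed.splits Mc.charpoly)
    omega
  have hmem : ∀ μ ∈ Mc.charpoly.roots, ‖μ‖ < 1 := by
    intro μ hμ
    apply h
    have hroot : Mc.charpoly.eval μ = 0 := (Polynomial.mem_roots'.mp hμ).2
    rw [spectrum.mem_iff]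
    intro hunit
    rw [Matrix.isUnit_iff_isUnit_det, isUnit_iff_ne_zero] at hunit
    apply hunit
    have hdet : ((algebraMap ℂ (Matrix (Fin n) (Fin n) ℂ)) μ - Mc).det
        = Mc.charpoly.eval μ := by
      rw [Matrix.charpoly, ← Polynomial.coe_evalRingHom, RingHom.map_det]
      congr 1
      ext i j
      by_cases hij : i = j <;>
        simp [Matrix.charmatrix_apply, Matrix.algebraMap_matrix_apply,
          Matrix.diagonal_apply, hij, Matrix.map_apply, Matrix.sub_apply]
    rw [hdet, hroot]
  calc |M.trace| = ‖(M.trace : ℂ)‖ := by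
        rw [Complex.norm_real, Real.norm_eq_abs]
    _ = ‖Mc.trace‖ := by rw [htr]
    _ = ‖Mc.charpoly.roots.sum‖ := by rw [Matrix.trace_eq_sum_roots_charpoly]
    _ ≤ (Mc.charpoly.roots.map norm).sum := norm_multiset_sum_le _
    _ ≤ (Mc.charpoly.roots.map norm).card • (1 : ℝ) := by
        refine Multiset.sum_le_card_nsmul _ _ ?_
        intro a ha
        obtain ⟨μ, hμ, rfl⟩ := Multiset.mem_map.mp ha
        have := hmem μ hμ
        exact this.le
    _ = (n : ℝ) := by simp [hcard]

/-- If every left-null vector of `W` is orthogonal to `v`, then `v` is in the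
column space of `W`. -/
lemma mem_colspan_of_leftnull {k T : Type*} [Fintype k] [Fintype T] [DecidableEq k]
    (W : Matrix k T ℝ)
    (v : k → ℝ) (h : ∀ η : k → ℝ, η ᵥ* W = 0 → η ⬝ᵥ v = 0) :
    ∃ c : T → ℝ, W *ᵥ c = v := by
  classical
  have hv : v ∈ LinearMap.range W.mulVecLin := by
    rw [← Subspace.forall_mem_dualAnnihilator_apply_eq_zero_iff (LinearMap.range W.mulVecLin) v]
    intro φ hφ
    rw [Submodule.mem_dualAnnihilator] at hφ
    set η : k → ℝ := fun i => φ (fun j => if i = j then 1 else 0) with hη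
    have hφw : ∀ w : k → ℝ, φ w = ∑ i, w i * η i := by
      intro w
      conv_lhs => rw [pi_eq_sum_univ w]
      rw [map_sum]
      refine Finset.sum_congr rfl fun i _ => ?_
      rw [_root_.map_smul, smul_eq_mul, hη]
    have hηW : η ᵥ* W = 0 := by
      funext t
      have hcol : (fun i => W i t) ∈ LinearMap.range W.mulVecLin := by
        refine ⟨fun s => if s = t then 1 else 0, ?_⟩
        funext i
        simp [Matrix.mulVecLin_apply, Matrix.mulVec, dotProduct, mul_ite]
      have h0 := hφ _ hcol
      rw [hφw] at h0
      simpa [Matrix.vecMul, dotProduct, mul_comm] using h0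
    have hd := h η hηW
    rw [hφw v]
    simpa [dotProduct, mul_comm] using hd
  obtain ⟨c, hc⟩ := hv
  exact ⟨c, hc⟩

lemma consistent_iff {n m T : ℕ} (A : Matrix (Fin n) (Fin n) ℝ)
    (B : Matrix (Fin n) (Fin m) ℝ) (u : Fin T → Fin m → ℝ)
    (x : Fin (T + 1) → Fin n → ℝ) :
    Consistent A B u x ↔ Xplus x = A * Xminus x + B * Uminus u := by
  constructor
  · intro h
    ext i t
    have := congrFun (h t) i
    simpa [Xplus, Xminus, Uminus, Matrix.mul_apply, Matrix.mulVec, dotProduct,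
      Matrix.add_apply] using this
  · intro h t
    funext i
    have := congrFun (congrFun h i) t
    simpa [Xplus, Xminus, Uminus, Matrix.mul_apply, Matrix.mulVec, dotProduct,
      Matrix.add_apply] using this

lemma vecMulVec_mul' {n k T : ℕ} (a : Fin n → ℝ) (b : Fin k → ℝ)
    (M : Matrix (Fin k) (Fin T) ℝ) :
    Matrix.vecMulVec a b * M = Matrix.vecMulVec a (b ᵥ* M) := by
  ext i t
  simp only [Matrix.mul_apply, Matrix.vecMulVec_apply, Matrix.vecMul, dotProduct]
  rw [Finset.mul_sum]
  exact Finset.sum_congr rfl fun j _ => by ring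

lemma vecMulVec_add' {n k : ℕ} (a : Fin n → ℝ) (b c : Fin k → ℝ) :
    Matrix.vecMulVec a (b + c) = Matrix.vecMulVec a b + Matrix.vecMulVec a c := by
  ext i j
  simp [Matrix.vecMulVec_apply, mul_add]

lemma trace_vecMulVec' {n : ℕ} (a b : Fin n → ℝ) :
    (Matrix.vecMulVec a b).trace = a ⬝ᵥ b := by
  simp [Matrix.trace, Matrix.diag, Matrix.vecMulVec_apply, dotProduct]

end Aux

/-- Data consistent with some system is `M`-informative for
stabilization iff `X₋` has full row rank `n` and there is a right inverse `X₋†`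
of `X₋` such that `X₊ X₋†` is Schur. -/
theorem stmt_9 {n m T : ℕ} (hn : 0 < n) (hm : 0 < m)
    (Atrue : Matrix (Fin n) (Fin n) ℝ) (Btrue : Matrix (Fin n) (Fin m) ℝ)
    (u : Fin T → Fin m → ℝ) (x : Fin (T + 1) → Fin n → ℝ)
    (hcons : Consistent Atrue Btrue u x) :
    InfStab Set.univ u x ↔
      ((Xminus x).rank = n ∧
        ∃ Xdag : Matrix (Fin T) (Fin n) ℝ,
          Xminus x * Xdag = 1 ∧ Schur (Xplus x * Xdag)) := by
  classical
  constructor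
  · rintro ⟨K, hK⟩
    have hmat : Xplus x = Atrue * Xminus x + Btrue * Uminus u :=
      (consistent_iff Atrue Btrue u x).mp hcons
    -- Key: any left-null combination of the data forces `η + ζ ᵥ* K = 0`.
    have hker : ∀ (η : Fin n → ℝ) (ζ : Fin m → ℝ),
        η ᵥ* Xminus x + ζ ᵥ* Uminus u = 0 → η + ζ ᵥ* K = 0 := by
      intro η ζ h0
      by_contra hψne
      set ψ : Fin n → ℝ := η + ζ ᵥ* K with hψ
      have hψψ : 0 < ψ ⬝ᵥ ψ := by
        rcases Function.ne_iff.mp hψne with ⟨i, hi⟩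
        have hle : ψ i * ψ i ≤ ψ ⬝ᵥ ψ := by
          unfold dotProduct
          refine Finset.single_le_sum (f := fun j => ψ j * ψ j)
            (fun j _ => mul_self_nonneg _) (Finset.mem_univ i)
        have : 0 < ψ i * ψ i := by
          have hne : ψ i ≠ 0 := by simpa using hi
          exact mul_self_pos.mpr hne
        linarith
      set S := Atrue + Btrue * K with hS
      set c : ℝ := (n + 1 + |S.trace|) / (ψ ⬝ᵥ ψ) with hc
      set A' := Atrue + c • Matrix.vecMulVec ψ η with hA'
      set B' := Btrue + c • Matrix.vecMulVec ψ ζ with hB'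
      have hcons' : (A', B') ∈ SigmaD u x := by
        show Consistent A' B' u x
        rw [consistent_iff, hA', hB', Matrix.add_mul, Matrix.add_mul, Matrix.smul_mul,
          Matrix.smul_mul, vecMulVec_mul', vecMulVec_mul', hmat]
        have hz : c • Matrix.vecMulVec ψ (η ᵥ* Xminus x)
            + c • Matrix.vecMulVec ψ (ζ ᵥ* Uminus u) = 0 := by
          rw [← smul_add, ← vecMulVec_add', h0]
          ext i t
          simp [Matrix.vecMulVec_apply]
        calc Atrue * Xminus x + Btrue * Uminus u
            = Atrue * Xminus x + Btrue * Uminus u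
              + (c • Matrix.vecMulVec ψ (η ᵥ* Xminus x)
                + c • Matrix.vecMulVec ψ (ζ ᵥ* Uminus u)) := by rw [hz, add_zero]
          _ = Atrue * Xminus x + c • Matrix.vecMulVec ψ (η ᵥ* Xminus x)
              + (Btrue * Uminus u + c • Matrix.vecMulVec ψ (ζ ᵥ* Uminus u)) := by abel
      have hSchur : Schur (A' + B' * K) := hK (A', B') ⟨hcons', trivial⟩
      have hclosed : A' + B' * K = S + c • Matrix.vecMulVec ψ ψ := by
        rw [hA', hB', Matrix.add_mul, Matrix.smul_mul, vecMulVec_mul', hS, hψ,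
          vecMulVec_add', smul_add]
        abel
      rw [hclosed] at hSchur
      have htr := schur_abs_trace_le hSchur
      have htrace : (S + c • Matrix.vecMulVec ψ ψ).trace
          = S.trace + (n + 1 + |S.trace|) := by
        rw [Matrix.trace_add, Matrix.trace_smul, trace_vecMulVec', smul_eq_mul, hc,
          div_mul_cancel₀ _ (ne_of_gt hψψ)]
      rw [htrace] at htr
      have h1 := (abs_le.mp htr).2
      have h2 := neg_abs_le S.trace
      linarith
    -- Solve `[X₋; U₋] Θ = [I; K]` column by column.
    set W : Matrix (Fin n ⊕ Fin m) (Fin T) ℝ :=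
      Matrix.fromRows (Xminus x) (Uminus u) with hW
    have hcol : ∀ j : Fin n, ∃ cvec : Fin T → ℝ,
        W *ᵥ cvec = fun i => Matrix.fromRows (1 : Matrix (Fin n) (Fin n) ℝ) K i j := by
      intro j
      apply mem_colspan_of_leftnull
      intro φ hφ
      have hφelim : φ = Sum.elim (φ ∘ Sum.inl) (φ ∘ Sum.inr) := by
        funext i; cases i <;> rfl
      have h1 : (φ ∘ Sum.inl) ᵥ* Xminus x + (φ ∘ Sum.inr) ᵥ* Uminus u = 0 := by
        rw [hφelim] at hφ
        rwa [hW, Matrix.sumElim_vecMul_fromRows] at hφ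
      have h2 := hker _ _ h1
      have h2j := congrFun h2 j
      simp only [Pi.add_apply, Pi.zero_apply] at h2j
      rw [dotProduct]
      rw [Fintype.sum_sum_type]
      have hl : ∑ i : Fin n, φ (Sum.inl i) *
          Matrix.fromRows (1 : Matrix (Fin n) (Fin n) ℝ) K (Sum.inl i) j
          = φ (Sum.inl j) := by
        simp [Matrix.fromRows_apply_inl, Matrix.one_apply, mul_ite]
      have hr : ∑ i : Fin m, φ (Sum.inr i) *
          Matrix.fromRows (1 : Matrix (Fin n) (Fin n) ℝ) K (Sum.inr i) j
          = ((φ ∘ Sum.inr) ᵥ* K) j := by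
        simp [Matrix.fromRows_apply_inr, Matrix.vecMul, dotProduct]
      rw [hl, hr]
      exact h2j
    choose cv hcv using hcol
    set Θ : Matrix (Fin T) (Fin n) ℝ := Matrix.of fun t j => cv j t with hΘ
    have hWΘ : W * Θ = Matrix.fromRows (1 : Matrix (Fin n) (Fin n) ℝ) K := by
      ext i j
      have := congrFun (hcv j) i
      rw [Matrix.mulVec, dotProduct] at this
      rw [Matrix.mul_apply]
      exact this
    rw [hW, Matrix.fromRows_mul] at hWΘ
    obtain ⟨hX1, hUK⟩ := Matrix.fromRows_inj hWΘ
    have hrank : (Xminus x).rank = n := by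
      refine le_antisymm ?_ ?_
      · simpa using (Xminus x).rank_le_card_height
      · calc n = (1 : Matrix (Fin n) (Fin n) ℝ).rank := by simp [Matrix.rank_one]
          _ = (Xminus x * Θ).rank := by rw [hX1]
          _ ≤ (Xminus x).rank := Matrix.rank_mul_le_left _ _
    refine ⟨hrank, Θ, hX1, ?_⟩
    have hXp : Xplus x * Θ = Atrue + Btrue * K := by
      rw [hmat, Matrix.add_mul, Matrix.mul_assoc, Matrix.mul_assoc, hX1, hUK,
        Matrix.mul_one]
    rw [hXp]
    exact hK (Atrue, Btrue) ⟨hcons, trivial⟩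
  · rintro ⟨-, Θ, hΘ1, hΘS⟩
    refine ⟨Uminus u * Θ, ?_⟩
    rintro ⟨A, B⟩ ⟨hAB, -⟩
    have hm' : Xplus x = A * Xminus x + B * Uminus u := (consistent_iff A B u x).mp hAB
    have hcl : A + B * (Uminus u * Θ) = Xplus x * Θ := by
      calc A + B * (Uminus u * Θ)
          = A * (Xminus x * Θ) + B * (Uminus u * Θ) := by rw [hΘ1, Matrix.mul_one]
        _ = (A * Xminus x + B * Uminus u) * Θ := by
            rw [Matrix.add_mul, Matrix.mul_assoc, Matrix.mul_assoc]
        _ = Xplus x * Θ := by rw [hm']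
    simpa [hcl] using hΘS
end

section
/- Let (A,B) be a system and let D = (u,x) be input-state data of length T consistent with (A,B). Then the following are equivalent: (i) the column span of the stacked (n+m)×T matrix [X_-; U_-] equals {(ξ,η) ∈ ℝ^n×ℝ^m : ξ ∈ R(A,[B x(0)])}, where [B x(0)] is the n×(m+1) matrix obtained by appending x(0) to B; (ii) the column span of [X_-; U_-] equals {(ξ,η) ∈ ℝ^n×ℝ^m : ξ ∈ column span of X_-} and the column span of X_+ is contained in the column span of X_-. -/
open Matrix

section Aux

variable {n m T : ℕ}

lemma colSpan_eq_span {p q : Type*} [Fintype q] (M : Matrix p q ℝ) :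
    colSpan M = Submodule.span ℝ (Set.range Mᵀ) := Matrix.range_mulVecLin M

lemma col_mem_colSpan {p q : Type*} [Fintype q] (M : Matrix p q ℝ) (j : q) :
    (fun i => M i j) ∈ colSpan M := by
  rw [colSpan_eq_span]; exact Submodule.subset_span ⟨j, rfl⟩

lemma colSpan_le_iff {p q : Type*} [Fintype q] (M : Matrix p q ℝ)
    (W : Submodule ℝ (p → ℝ)) : colSpan M ≤ W ↔ ∀ j, (fun i => M i j) ∈ W := by
  rw [colSpan_eq_span, Submodule.span_le]
  constructor
  · intro h j; exact h ⟨j, rfl⟩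
  · rintro h _ ⟨j, rfl⟩; exact h j

lemma mulVec_mem_colSpan {p q : Type*} [Fintype q] (M : Matrix p q ℝ) (v : q → ℝ) :
    M.mulVec v ∈ colSpan M := ⟨v, rfl⟩

lemma mulVec_col (A : Matrix (Fin n) (Fin n) ℝ) {p : Type*} (M : Matrix (Fin n) p ℝ)
    (j : p) : A.mulVec (fun s => M s j) = fun i => (A * M) i j := by
  ext i; simp [Matrix.mulVec, Matrix.mul_apply, dotProduct]

lemma pow_eq_sum_lt (hn : 0 < n) (A : Matrix (Fin n) (Fin n) ℝ) (k : ℕ) :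
    ∃ c : ℕ → ℝ, A ^ k = ∑ l ∈ Finset.range n, c l • A ^ l := by
  have hmon := A.charpoly_monic
  have hdeg : A.charpoly.natDegree = n := by simp
  have hne1 : A.charpoly ≠ 1 := by
    intro h; rw [h] at hdeg; simp at hdeg; omega
  have hlt : ((Polynomial.X ^ k %ₘ A.charpoly)).natDegree < n := by
    have := Polynomial.natDegree_modByMonic_lt (Polynomial.X ^ k) hmon hne1
    omega
  refine ⟨fun l => (Polynomial.X ^ k %ₘ A.charpoly).coeff l, ?_⟩
  rw [Matrix.pow_eq_aeval_mod_charpoly, Polynomial.aeval_eq_sum_range' hlt]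

lemma pow_col_mem_Rspace (hn : 0 < n) (A : Matrix (Fin n) (Fin n) ℝ)
    {p : Type*} [Fintype p] (C : Matrix (Fin n) p ℝ) (k : ℕ) (j : p) :
    (fun i => (A ^ k * C) i j) ∈ Rspace A C := by
  obtain ⟨c, hc⟩ := pow_eq_sum_lt hn A k
  rw [hc]
  have hsum : (fun i => ((∑ l ∈ Finset.range n, c l • A ^ l) * C) i j)
      = ∑ l ∈ Finset.range n, c l • (fun i => (A ^ l * C) i j) := by
    ext i
    simp [Matrix.sum_mul, Matrix.sum_apply, Matrix.smul_mul, Finset.sum_apply]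
  rw [hsum]
  refine Submodule.sum_mem _ fun l hl => Submodule.smul_mem _ _ ?_
  have hl' := Finset.mem_range.mp hl
  rw [Rspace, colSpan_eq_span]
  exact Submodule.subset_span ⟨(⟨l, hl'⟩, j), rfl⟩

lemma col_mem_Rspace (hn : 0 < n) (A : Matrix (Fin n) (Fin n) ℝ)
    {p : Type*} [Fintype p] (C : Matrix (Fin n) p ℝ) (j : p) :
    (fun i => C i j) ∈ Rspace A C := by
  have := pow_col_mem_Rspace hn A C 0 j
  simpa using this

lemma Rspace_inv (hn : 0 < n) (A : Matrix (Fin n) (Fin n) ℝ)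
    {p : Type*} [Fintype p] (C : Matrix (Fin n) p ℝ) {w : Fin n → ℝ}
    (hw : w ∈ Rspace A C) : A.mulVec w ∈ Rspace A C := by
  have hle : Rspace A C ≤ (Rspace A C).comap A.mulVecLin := by
    rw [Rspace, colSpan_le_iff]
    intro q
    simp only [Submodule.mem_comap]
    have hcol : A.mulVecLin (fun i => reachMat A C i q) =
        fun i => (A ^ ((q.1 : ℕ) + 1) * C) i q.2 := by
      have h1 : (fun i => reachMat A C i q) = fun s => (A ^ (q.1 : ℕ) * C) s q.2 := rfl
      rw [Matrix.mulVecLin_apply, h1, mulVec_col, ← Matrix.mul_assoc, ← pow_succ']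
    rw [hcol]
    exact pow_col_mem_Rspace hn A C _ _
  exact hle hw

lemma colSpan_B_le_Rspace (hn : 0 < n) (A : Matrix (Fin n) (Fin n) ℝ)
    (B : Matrix (Fin n) (Fin m) ℝ) (x0 : Fin n → ℝ) :
    colSpan B ≤ Rspace A (augCol B x0) := by
  rw [colSpan_le_iff]
  intro j
  have := col_mem_Rspace hn A (augCol B x0) (Sum.inl j)
  simpa [augCol] using this

lemma x0_mem_Rspace (hn : 0 < n) (A : Matrix (Fin n) (Fin n) ℝ)
    (B : Matrix (Fin n) (Fin m) ℝ) (x0 : Fin n → ℝ) :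
    x0 ∈ Rspace A (augCol B x0) := by
  have := col_mem_Rspace hn A (augCol B x0) (Sum.inr 0)
  simpa [augCol] using this

lemma stacked_mulVec (X : Matrix (Fin n) (Fin T) ℝ) (U : Matrix (Fin m) (Fin T) ℝ)
    (v : Fin T → ℝ) :
    (stacked X U).mulVec v = Sum.elim (X.mulVec v) (U.mulVec v) := by
  ext (i | i) <;> simp [stacked, Matrix.mulVec, Matrix.fromRows_apply_inl, Matrix.fromRows_apply_inr, dotProduct]

lemma projN_surj : Function.Surjective (projN n m) :=
  LinearMap.funLeft_surjective_of_injective ℝ ℝ Sum.inl Sum.inl_injective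

lemma map_projN_colSpan (X : Matrix (Fin n) (Fin T) ℝ) (U : Matrix (Fin m) (Fin T) ℝ) :
    Submodule.map (projN n m) (colSpan (stacked X U)) = colSpan X := by
  rw [colSpan, colSpan, ← LinearMap.range_comp]
  congr 1

lemma Xplus_eq {A : Matrix (Fin n) (Fin n) ℝ} {B : Matrix (Fin n) (Fin m) ℝ}
    {u : Fin T → Fin m → ℝ} {x : Fin (T + 1) → Fin n → ℝ}
    (hcons : Consistent A B u x) :
    Xplus x = A * Xminus x + B * Uminus u := by
  ext i t
  have h := hcons t
  have hi : x t.succ i = (A.mulVec (x t.castSucc) + B.mulVec (u t)) i := by rw [h]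
  simpa [Xplus, Xminus, Uminus, Matrix.mul_apply, Matrix.mulVec, dotProduct] using hi

end Aux

/-- For data consistent with `(A,B)`, the conditions
`im [X₋; U₋] = R(A,[B x(0)]) × ℝ^m` and
(`im [X₋; U₋] = im X₋ × ℝ^m` and `im X₊ ⊆ im X₋`) are equivalent. -/
theorem stmt_13 {n m T : ℕ} (hn : 0 < n) (hm : 0 < m)
    (A : Matrix (Fin n) (Fin n) ℝ) (B : Matrix (Fin n) (Fin m) ℝ)
    (u : Fin T → Fin m → ℝ) (x : Fin (T + 1) → Fin n → ℝ)
    (hcons : Consistent A B u x) :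
    (colSpan (stacked (Xminus x) (Uminus u)) =
        (Rspace A (augCol B (x 0))).comap (projN n m)) ↔
      (colSpan (stacked (Xminus x) (Uminus u)) =
          (colSpan (Xminus x)).comap (projN n m) ∧
        colSpan (Xplus x) ≤ colSpan (Xminus x)) := by
  classical
  set C := augCol B (x 0) with hC
  -- every state lies in the reachable space
  have hxR : ∀ t : Fin (T + 1), x t ∈ Rspace A C := by
    intro t
    induction t using Fin.induction with
    | zero => exact x0_mem_Rspace hn A B (x 0)
    | succ t ih =>
        rw [hcons t]
        exact Submodule.add_mem _ (Rspace_inv hn A C ih)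
          (colSpan_B_le_Rspace hn A B (x 0) (mulVec_mem_colSpan B (u t)))
  have hXle : colSpan (Xminus x) ≤ Rspace A C := by
    rw [colSpan_le_iff]
    intro t
    exact hxR t.castSucc
  -- decomposition of X₊ ∘ v
  have hXp : ∀ v : Fin T → ℝ, (Xplus x).mulVec v =
      A.mulVec ((Xminus x).mulVec v) + B.mulVec ((Uminus u).mulVec v) := by
    intro v
    rw [Xplus_eq hcons, Matrix.add_mulVec, ← Matrix.mulVec_mulVec, ← Matrix.mulVec_mulVec]
  -- degenerate-data argument : the comap equality forces T > 0
  have hT0 : ∀ W : Submodule ℝ (Fin n → ℝ),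
      colSpan (stacked (Xminus x) (Uminus u)) = W.comap (projN n m) → 0 < T := by
    intro W hSW
    by_contra hT
    have hT' : T = 0 := by omega
    subst hT'
    set η : Fin m → ℝ := Pi.single (⟨0, hm⟩ : Fin m) 1 with hη
    have hw : Sum.elim (0 : Fin n → ℝ) η ∈ W.comap (projN n m) := by
      have h0 : projN n m (Sum.elim (0 : Fin n → ℝ) η) = 0 := rfl
      rw [Submodule.mem_comap, h0]
      exact W.zero_mem
    rw [← hSW] at hw
    obtain ⟨v, hv⟩ := hw
    have h1 := congrFun hv (Sum.inr ⟨0, hm⟩)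
    have h2 : (stacked (Xminus x) (Uminus u)).mulVecLin v (Sum.inr ⟨0, hm⟩) = 0 := by
      simp [Matrix.mulVecLin_apply, Matrix.mulVec, dotProduct]
    rw [h2] at h1
    have h3 : η ⟨0, hm⟩ = 1 := by simp [hη]
    rw [Sum.elim_inr, h3] at h1
    exact one_ne_zero h1.symm
  constructor
  · -- (i) → (ii)
    intro h
    have hmap := map_projN_colSpan (Xminus x) (Uminus u)
    rw [h, Submodule.map_comap_eq_of_surjective projN_surj] at hmap
    -- hmap : Rspace A C = colSpan (Xminus x)
    refine ⟨by rw [h, hmap], ?_⟩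
    rintro _ ⟨v, rfl⟩
    have h1 : (Xminus x).mulVec v ∈ Rspace A C := hXle (mulVec_mem_colSpan _ v)
    have h2 : (Xplus x).mulVecLin v ∈ Rspace A C := by
      rw [Matrix.mulVecLin_apply, hXp v]
      exact Submodule.add_mem _ (Rspace_inv hn A C h1)
        (colSpan_B_le_Rspace hn A B (x 0) (mulVec_mem_colSpan B _))
    rw [← hmap]
    exact h2
  · -- (ii) → (i)
    rintro ⟨h1, h2⟩
    have hT : 0 < T := hT0 _ h1
    -- the key closure property of colSpan X₋
    have key : ∀ ξ ∈ colSpan (Xminus x), ∀ η : Fin m → ℝ,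
        A.mulVec ξ + B.mulVec η ∈ colSpan (Xminus x) := by
      intro ξ hξ η
      have hw : Sum.elim ξ η ∈ (colSpan (Xminus x)).comap (projN n m) := by
        have h0 : projN n m (Sum.elim ξ η) = ξ := rfl
        rw [Submodule.mem_comap, h0]
        exact hξ
      rw [← h1] at hw
      obtain ⟨v, hv⟩ := hw
      have hX : (Xminus x).mulVec v = ξ := funext fun i => congrFun hv (Sum.inl i)
      have hU : (Uminus u).mulVec v = η := funext fun i => congrFun hv (Sum.inr i)
      have : A.mulVec ξ + B.mulVec η = (Xplus x).mulVec v := by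
        rw [hXp v, hX, hU]
      rw [this]
      exact h2 (mulVec_mem_colSpan _ v)
    have hA : ∀ ξ ∈ colSpan (Xminus x), A.mulVec ξ ∈ colSpan (Xminus x) := by
      intro ξ hξ
      have := key ξ hξ 0
      simpa [Matrix.mulVec_zero] using this
    have hB : ∀ η : Fin m → ℝ, B.mulVec η ∈ colSpan (Xminus x) := by
      intro η
      have := key 0 (Submodule.zero_mem _) η
      simpa [Matrix.mulVec_zero] using this
    have hx0 : x 0 ∈ colSpan (Xminus x) := by
      have hcol := col_mem_colSpan (Xminus x) ⟨0, hT⟩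
      have h0 : (⟨0, hT⟩ : Fin T).castSucc = 0 := by
        apply Fin.ext; simp
      have : (fun i => Xminus x i ⟨0, hT⟩) = x 0 := by
        funext i
        show x (⟨0, hT⟩ : Fin T).castSucc i = x 0 i
        rw [h0]
      rwa [this] at hcol
    -- powers of A applied to columns of C stay in colSpan X₋
    have claim : ∀ k : ℕ, ∀ j : Fin m ⊕ Fin 1,
        (fun i => (A ^ k * C) i j) ∈ colSpan (Xminus x) := by
      intro k
      induction k with
      | zero =>
          intro j
          simp only [pow_zero, Matrix.one_mul]
          cases j with
          | inl j =>
              have hBcol : (fun i => C i (Sum.inl j)) = fun i => B i j := rfl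
              rw [hBcol]
              have hle : colSpan B ≤ colSpan (Xminus x) := by
                rintro _ ⟨v, rfl⟩; exact hB v
              exact hle (col_mem_colSpan B j)
          | inr j =>
              have : (fun i => C i (Sum.inr j)) = x 0 := rfl
              rw [this]; exact hx0
      | succ k ih =>
          intro j
          have hstep : (fun i => (A ^ (k + 1) * C) i j)
              = A.mulVec (fun i => (A ^ k * C) i j) := by
            rw [mulVec_col, ← Matrix.mul_assoc, ← pow_succ']
          rw [hstep]
          exact hA _ (ih j)
    have hRle : Rspace A C ≤ colSpan (Xminus x) := by
      rw [Rspace, colSpan_le_iff]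
      intro q
      exact claim (q.1 : ℕ) q.2
    have hXR : colSpan (Xminus x) = Rspace A C := le_antisymm hXle hRle
    rw [h1, hXR]
end

section
/- Let (A,B) be a system and let D = (u,x) be input-state data of length T consistent with (A,B). If the inputs u(0),…,u(T−1) are persistently exciting of order n+1, then the column span of the stacked (n+m)×T matrix [X_-; U_-] equals {(ξ,η) ∈ ℝ^n×ℝ^m : ξ ∈ R(A,[B x(0)])}, where [B x(0)] is the n×(m+1) matrix obtained by appending x(0) to B. -/
open Matrix

lemma ch_sum {n : ℕ} (A : Matrix (Fin n) (Fin n) ℝ) :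
    ∑ ℓ ∈ Finset.range (n+1), A.charpoly.coeff ℓ • A ^ ℓ = 0 := by
  have h := Matrix.aeval_self_charpoly A
  rw [Polynomial.aeval_eq_sum_range] at h
  simpa using h

lemma ch_lead {n : ℕ} (A : Matrix (Fin n) (Fin n) ℝ) : A.charpoly.coeff n = 1 := by
  have h := (Matrix.charpoly_monic A).coeff_natDegree
  simpa using h

lemma pow_n_eq {n : ℕ} (A : Matrix (Fin n) (Fin n) ℝ) :
    A ^ n = -∑ ℓ ∈ Finset.range n, A.charpoly.coeff ℓ • A ^ ℓ := by
  have h := ch_sum A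
  rw [Finset.sum_range_succ] at h
  have hl : A.charpoly.coeff n = 1 := by simpa using (Matrix.charpoly_monic A).coeff_natDegree
  rw [hl, one_smul] at h
  linear_combination (norm := abel) h

lemma my_sum_mulVec {α q r : Type*} [Fintype q] (s : Finset α) (M : α → Matrix r q ℝ)
    (v : q → ℝ) : (∑ a ∈ s, M a) *ᵥ v = ∑ a ∈ s, M a *ᵥ v := by
  ext i
  simp only [Matrix.mulVec, dotProduct, Matrix.sum_apply, Finset.sum_apply, Finset.sum_mul]
  exact Finset.sum_comm

lemma reachMat_mulVec {n : ℕ} (A : Matrix (Fin n) (Fin n) ℝ) {p : Type*} [Fintype p]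
    (C : Matrix (Fin n) p ℝ) (w : Fin n × p → ℝ) :
    reachMat A C *ᵥ w = ∑ k : Fin n, (A ^ (k : ℕ) * C) *ᵥ (fun q => w (k, q)) := by
  ext i
  simp only [Matrix.mulVec, dotProduct, reachMat, Matrix.of_apply, Finset.sum_apply]
  rw [Fintype.sum_prod_type]

lemma pow_mul_mulVec_mem {n : ℕ} (A : Matrix (Fin n) (Fin n) ℝ) {p : Type*} [Fintype p]
    (C : Matrix (Fin n) p ℝ) (k : ℕ) (z : p → ℝ) :
    (A ^ k * C) *ᵥ z ∈ Rspace A C := by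
  induction k using Nat.strong_induction_on with
  | _ k ih =>
    by_cases hk : k < n
    · refine ⟨fun q => if (q.1 : ℕ) = k then z q.2 else 0, ?_⟩
      rw [Matrix.mulVecLin_apply, reachMat_mulVec]
      rw [Finset.sum_eq_single (⟨k, hk⟩ : Fin n)]
      · simp
      · intro b _ hb
        have : ((b : ℕ) = k) = False := by
          simp only [eq_iff_iff, iff_false]
          intro h; exact hb (Fin.ext h)
        simp only [this, if_false]
        exact Matrix.mulVec_zero _
      · simp
    · push_neg at hk
      have hek : A ^ k = A ^ (k - n) * A ^ n := by
        rw [← pow_add]; congr 1; omega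
      rw [hek, pow_n_eq A, mul_neg, Matrix.mul_sum, Matrix.neg_mul, Matrix.sum_mul,
        Matrix.neg_mulVec, my_sum_mulVec]
      refine Submodule.neg_mem _ (Submodule.sum_mem _ fun ℓ hℓ => ?_)
      rw [Matrix.mul_smul, Matrix.smul_mul, ← pow_add,
        Matrix.smul_mulVec]
      refine Submodule.smul_mem _ _ (ih _ ?_)
      simp only [Finset.mem_range] at hℓ
      omega

lemma mulVec_mem_Rspace {n : ℕ} (A : Matrix (Fin n) (Fin n) ℝ) {p : Type*} [Fintype p]
    (C : Matrix (Fin n) p ℝ) {v : Fin n → ℝ} (hv : v ∈ Rspace A C) :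
    A *ᵥ v ∈ Rspace A C := by
  obtain ⟨w, rfl⟩ := hv
  rw [Matrix.mulVecLin_apply, reachMat_mulVec, ← Matrix.mulVecLin_apply, map_sum]
  refine Submodule.sum_mem _ fun k _ => ?_
  rw [Matrix.mulVecLin_apply, Matrix.mulVec_mulVec, ← Matrix.mul_assoc, ← pow_succ']
  exact pow_mul_mulVec_mem A C _ _

lemma mulVec_C_mem_Rspace {n : ℕ} (A : Matrix (Fin n) (Fin n) ℝ) {p : Type*} [Fintype p]
    (C : Matrix (Fin n) p ℝ) (z : p → ℝ) : C *ᵥ z ∈ Rspace A C := by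
  have := pow_mul_mulVec_mem A C 0 z
  simpa using this

lemma PE_left_kernel {m T : ℕ} (u : Fin T → Fin m → ℝ) {k : ℕ} (hPE : PE u k)
    (w : Fin k × Fin m → ℝ) (hw : w ᵥ* Hankel u k = 0) : w = 0 := by
  have hrt : (Hankel u k)ᵀ.rank = k * m := by rw [Matrix.rank_transpose]; exact hPE
  have h1 := LinearMap.finrank_range_add_finrank_ker ((Hankel u k)ᵀ).mulVecLin
  have hdom : Module.finrank ℝ (Fin k × Fin m → ℝ) = k * m := by
    simp [Module.finrank_pi]
  rw [hdom] at h1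
  have hker0 : Module.finrank ℝ (LinearMap.ker ((Hankel u k)ᵀ).mulVecLin) = 0 := by
    have h2 : (Hankel u k)ᵀ.rank = Module.finrank ℝ (LinearMap.range ((Hankel u k)ᵀ).mulVecLin) := rfl
    omega
  have hker : LinearMap.ker ((Hankel u k)ᵀ).mulVecLin = ⊥ :=
    Submodule.finrank_eq_zero.mp hker0
  have hmem : w ∈ LinearMap.ker ((Hankel u k)ᵀ).mulVecLin := by
    rw [LinearMap.mem_ker, Matrix.mulVecLin_apply, Matrix.mulVec_transpose, hw]
  rw [hker, Submodule.mem_bot] at hmem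
  exact hmem

lemma PE_T_bound {m T n : ℕ} (u : Fin T → Fin m → ℝ) (hm : 0 < m) (hPE : PE u (n + 1)) :
    2 * n + 1 ≤ T := by
  have h := Matrix.rank_le_card_width (Hankel u (n+1))
  rw [hPE] at h
  simp only [Fintype.card_fin] at h
  have : n + 1 ≤ (n+1) * m := Nat.le_mul_of_pos_right _ hm
  omega

lemma my_dot_sum {α q : Type*} [Fintype q] (s : Finset α) (v : q → ℝ) (f : α → q → ℝ) :
    v ⬝ᵥ (∑ a ∈ s, f a) = ∑ a ∈ s, v ⬝ᵥ f a := by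
  simp only [dotProduct, Finset.sum_apply, Finset.mul_sum]
  exact Finset.sum_comm

lemma my_sum_dot {α q : Type*} [Fintype q] (s : Finset α) (v : q → ℝ) (f : α → q → ℝ) :
    (∑ a ∈ s, f a) ⬝ᵥ v = ∑ a ∈ s, f a ⬝ᵥ v := by
  simp only [dotProduct, Finset.sum_apply, Finset.sum_mul]
  exact Finset.sum_comm

lemma my_vecMul_sum {α q r : Type*} [Fintype r] (s : Finset α) (x : r → ℝ)
    (M : α → Matrix r q ℝ) : x ᵥ* (∑ a ∈ s, M a) = ∑ a ∈ s, x ᵥ* M a := by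
  ext j
  simp only [Matrix.vecMul, dotProduct, Matrix.sum_apply, Finset.sum_apply, Finset.mul_sum]
  exact Finset.sum_comm

lemma my_vecMul_smul {q r : Type*} [Fintype r] (x : r → ℝ) (c : ℝ) (M : Matrix r q ℝ) :
    x ᵥ* (c • M) = c • (x ᵥ* M) := by
  ext j
  simp only [Matrix.vecMul, dotProduct, Matrix.smul_apply, Pi.smul_apply, smul_eq_mul,
    Finset.mul_sum]
  exact Finset.sum_congr rfl fun i _ => by ring

lemma key_kernel {n m T : ℕ} (hn : 0 < n) (hm : 0 < m)
    (A : Matrix (Fin n) (Fin n) ℝ) (B : Matrix (Fin n) (Fin m) ℝ)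
    (u : Fin T → Fin m → ℝ) (x : Fin (T + 1) → Fin n → ℝ)
    (hcons : Consistent A B u x) (hPE : PE u (n + 1))
    (ξ : Fin n → ℝ) (η : Fin m → ℝ)
    (hker : ∀ t : Fin T, ξ ⬝ᵥ x t.castSucc + η ⬝ᵥ u t = 0) :
    η = 0 ∧ (∀ k, ξ ᵥ* (A ^ k * B) = 0) ∧ (∀ k < T, ξ ⬝ᵥ (A ^ k *ᵥ x 0) = 0) := by
  classical
  have hT : 2 * n + 1 ≤ T := PE_T_bound u hm hPE
  set c : ℕ → ℝ := fun ℓ => A.charpoly.coeff ℓ with hc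
  set u' : ℕ → Fin m → ℝ := fun t => if h : t < T then u ⟨t, h⟩ else 0 with hu'
  set x' : ℕ → Fin n → ℝ := fun t => if h : t < T + 1 then x ⟨t, h⟩ else 0 with hx'
  set g : ℕ → Fin m → ℝ := fun s => ξ ᵥ* (A ^ s * B) with hgdef
  have hstep : ∀ t < T, x' (t + 1) = A *ᵥ x' t + B *ᵥ u' t := by
    intro t ht
    simp only [hx', hu', dif_pos (by omega : t + 1 < T + 1), dif_pos (by omega : t < T + 1),
      dif_pos ht]
    exact hcons ⟨t, ht⟩
  have hkerN : ∀ t < T, ξ ⬝ᵥ x' t + η ⬝ᵥ u' t = 0 := by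
    intro t ht
    simp only [hx', hu', dif_pos (by omega : t < T + 1), dif_pos ht]
    exact hker ⟨t, ht⟩
  have hsol : ∀ i ℓ, i + ℓ ≤ T → x' (i + ℓ) = (A ^ ℓ) *ᵥ x' i
      + ∑ j ∈ Finset.range ℓ, (A ^ (ℓ - 1 - j)) *ᵥ (B *ᵥ u' (i + j)) := by
    intro i ℓ
    induction ℓ with
    | zero => simp
    | succ ℓ ih =>
      intro hle
      have h1 : i + ℓ ≤ T := by omega
      have h2 := hstep (i + ℓ) (by omega)
      rw [show i + (ℓ + 1) = (i + ℓ) + 1 from rfl, h2, ih h1]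
      have hsum : (A *ᵥ ∑ j ∈ Finset.range ℓ, (A ^ (ℓ - 1 - j)) *ᵥ (B *ᵥ u' (i + j)))
          = ∑ j ∈ Finset.range ℓ, (A ^ (ℓ - j)) *ᵥ (B *ᵥ u' (i + j)) := by
        rw [← Matrix.mulVecLin_apply, map_sum]
        refine Finset.sum_congr rfl fun j hj => ?_
        rw [Finset.mem_range] at hj
        rw [Matrix.mulVecLin_apply, Matrix.mulVec_mulVec, ← pow_succ',
          show ℓ - 1 - j + 1 = ℓ - j by omega]
      rw [Matrix.mulVec_add, hsum, Matrix.mulVec_mulVec, ← pow_succ', Finset.sum_range_succ]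
      have h3 : ∀ j ∈ Finset.range ℓ, (A ^ (ℓ + 1 - 1 - j)) *ᵥ (B *ᵥ u' (i + j))
          = (A ^ (ℓ - j)) *ᵥ (B *ᵥ u' (i + j)) := fun j hj => by
        rw [show ℓ + 1 - 1 - j = ℓ - j by omega]
      rw [Finset.sum_congr rfl h3, show ℓ + 1 - 1 - ℓ = 0 by omega, pow_zero, Matrix.one_mulVec]
      abel
  -- the dot-product expansion
  have hdot : ∀ i ℓ, i + ℓ ≤ T → ξ ⬝ᵥ x' (i + ℓ) = ξ ⬝ᵥ ((A ^ ℓ) *ᵥ x' i)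
      + ∑ j ∈ Finset.range ℓ, g (ℓ - 1 - j) ⬝ᵥ u' (i + j) := by
    intro i ℓ hle
    rw [hsol i ℓ hle, dotProduct_add, my_dot_sum]
    congr 1
    refine Finset.sum_congr rfl fun j hj => ?_
    rw [Matrix.mulVec_mulVec, dotProduct_mulVec]
  -- the key relation on Hankel columns
  set w : ℕ → Fin m → ℝ :=
    fun j => (∑ ℓ ∈ Finset.Ico (j + 1) (n + 1), c ℓ • g (ℓ - 1 - j)) + c j • η with hwdef
  have hrel : ∀ i, i + n < T → ∑ j ∈ Finset.range (n + 1), (w j) ⬝ᵥ u' (i + j) = 0 := by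
    intro i hiT
    have e2 : ∑ ℓ ∈ Finset.range (n + 1), c ℓ * (ξ ⬝ᵥ x' (i + ℓ) + η ⬝ᵥ u' (i + ℓ)) = 0 :=
      Finset.sum_eq_zero fun ℓ hℓ => by
        rw [hkerN (i + ℓ) (by rw [Finset.mem_range] at hℓ; omega), mul_zero]
    have part1 : ∑ ℓ ∈ Finset.range (n + 1), c ℓ * (ξ ⬝ᵥ ((A ^ ℓ) *ᵥ x' i)) = 0 := by
      have : ∑ ℓ ∈ Finset.range (n + 1), c ℓ * (ξ ⬝ᵥ ((A ^ ℓ) *ᵥ x' i))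
          = ξ ⬝ᵥ ((∑ ℓ ∈ Finset.range (n + 1), c ℓ • A ^ ℓ) *ᵥ x' i) := by
        rw [my_sum_mulVec, my_dot_sum]
        refine Finset.sum_congr rfl fun ℓ _ => ?_
        rw [Matrix.smul_mulVec, dotProduct_smul, smul_eq_mul]
      rw [this, ch_sum A, Matrix.zero_mulVec, dotProduct_zero]
    have expand : ∑ ℓ ∈ Finset.range (n + 1), c ℓ * (ξ ⬝ᵥ x' (i + ℓ) + η ⬝ᵥ u' (i + ℓ))
        = ∑ ℓ ∈ Finset.range (n + 1), c ℓ * (ξ ⬝ᵥ ((A ^ ℓ) *ᵥ x' i))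
        + ∑ ℓ ∈ Finset.range (n + 1),
            (∑ j ∈ Finset.range ℓ, c ℓ * (g (ℓ - 1 - j) ⬝ᵥ u' (i + j)))
        + ∑ ℓ ∈ Finset.range (n + 1), c ℓ * (η ⬝ᵥ u' (i + ℓ)) := by
      rw [← Finset.sum_add_distrib, ← Finset.sum_add_distrib]
      refine Finset.sum_congr rfl fun ℓ hℓ => ?_
      rw [Finset.mem_range] at hℓ
      rw [hdot i ℓ (by omega), mul_add, mul_add, Finset.mul_sum]
    have swap : ∑ ℓ ∈ Finset.range (n + 1),
          (∑ j ∈ Finset.range ℓ, c ℓ * (g (ℓ - 1 - j) ⬝ᵥ u' (i + j)))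
        = ∑ j ∈ Finset.range (n + 1),
            ∑ ℓ ∈ Finset.Ico (j + 1) (n + 1), c ℓ * (g (ℓ - 1 - j) ⬝ᵥ u' (i + j)) := by
      simp only [Finset.range_eq_Ico]
      exact (Finset.sum_Ico_Ico_comm' 0 (n + 1)
        (fun a b => c b * (g (b - 1 - a) ⬝ᵥ u' (i + a)))).symm
    have final : ∑ j ∈ Finset.range (n + 1), (w j) ⬝ᵥ u' (i + j)
        = ∑ j ∈ Finset.range (n + 1),
            ∑ ℓ ∈ Finset.Ico (j + 1) (n + 1), c ℓ * (g (ℓ - 1 - j) ⬝ᵥ u' (i + j))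
        + ∑ j ∈ Finset.range (n + 1), c j * (η ⬝ᵥ u' (i + j)) := by
      rw [← Finset.sum_add_distrib]
      refine Finset.sum_congr rfl fun j hj => ?_
      rw [hwdef]
      simp only [add_dotProduct, my_sum_dot, smul_dotProduct, smul_eq_mul]
    rw [final, ← swap]
    have := expand
    rw [e2] at this
    linarith [part1, this]
  -- Hankel vanishing
  set W : Fin (n + 1) × Fin m → ℝ := fun q => w q.1 q.2 with hWdef
  have hWH : W ᵥ* Hankel u (n + 1) = 0 := by
    ext i
    have hiT : (i : ℕ) + n < T := by
      have := i.isLt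
      omega
    have key := hrel i hiT
    rw [Pi.zero_apply]
    have lhs_eq : (W ᵥ* Hankel u (n + 1)) i
        = ∑ j ∈ Finset.range (n + 1), w j ⬝ᵥ u' ((i : ℕ) + j) := by
      rw [← Fin.sum_univ_eq_sum_range (fun j => w j ⬝ᵥ u' ((i : ℕ) + j)) (n + 1)]
      have h0 : (W ᵥ* Hankel u (n + 1)) i
          = ∑ q : Fin (n + 1) × Fin m, W q * Hankel u (n + 1) q i := rfl
      rw [h0, Fintype.sum_prod_type]
      refine Finset.sum_congr rfl fun j _ => ?_
      simp only [dotProduct]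
      refine Finset.sum_congr rfl fun p _ => ?_
      congr 1
      simp only [hu', Hankel, Matrix.of_apply]
      rw [dif_pos (show (i : ℕ) + (j : ℕ) < T by have := j.isLt; omega)]
    rw [lhs_eq, key]
  have hW0 : W = 0 := PE_left_kernel u hPE W hWH
  have hwzero : ∀ j, j ≤ n → w j = 0 := by
    intro j hj
    ext p
    have := congrFun hW0 (⟨j, by omega⟩, p)
    exact this
  have hη : η = 0 := by
    have h := hwzero n le_rfl
    rw [hwdef] at h
    simp only [Finset.Ico_self, Finset.sum_empty, zero_add] at h
    have hcn : c n = 1 := by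
      rw [hc]; simpa using (Matrix.charpoly_monic A).coeff_natDegree
    rw [hcn, one_smul] at h
    exact h
  have hglt : ∀ k, k < n → g k = 0 := by
    intro k
    induction k using Nat.strong_induction_on with
    | _ k ih =>
      intro hkn
      have hw := hwzero (n - 1 - k) (by omega)
      simp only [hwdef, hη, smul_zero, add_zero] at hw
      rw [Finset.sum_Ico_succ_top (by omega : n - 1 - k + 1 ≤ n)] at hw
      have hz : ∑ ℓ ∈ Finset.Ico (n - 1 - k + 1) n, c ℓ • g (ℓ - 1 - (n - 1 - k)) = 0 :=
        Finset.sum_eq_zero fun ℓ hℓ => by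
          rw [Finset.mem_Ico] at hℓ
          rw [ih (ℓ - 1 - (n - 1 - k)) (by omega) (by omega), smul_zero]
      rw [hz, zero_add, show n - 1 - (n - 1 - k) = k by omega] at hw
      have hcn : c n = 1 := by
        rw [hc]; simpa using (Matrix.charpoly_monic A).coeff_natDegree
      rw [hcn, one_smul] at hw
      exact hw
  have hgall : ∀ k, g k = 0 := by
    intro k
    induction k using Nat.strong_induction_on with
    | _ k ih =>
      by_cases hk : k < n
      · exact hglt k hk
      · push_neg at hk
        have hmat : ∑ ℓ ∈ Finset.range (n + 1), c ℓ • (A ^ (k - n + ℓ) * B) = 0 := by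
          have : ∑ ℓ ∈ Finset.range (n + 1), c ℓ • (A ^ (k - n + ℓ) * B)
              = A ^ (k - n) * (∑ ℓ ∈ Finset.range (n + 1), c ℓ • A ^ ℓ) * B := by
            rw [Matrix.mul_sum, Matrix.sum_mul]
            refine Finset.sum_congr rfl fun ℓ _ => ?_
            rw [Matrix.mul_smul, Matrix.smul_mul, pow_add]
          rw [this, ch_sum A, Matrix.mul_zero, Matrix.zero_mul]
        have hvm : ∑ ℓ ∈ Finset.range (n + 1), c ℓ • g (k - n + ℓ) = 0 := by
          have : ∑ ℓ ∈ Finset.range (n + 1), c ℓ • g (k - n + ℓ)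
              = ξ ᵥ* (∑ ℓ ∈ Finset.range (n + 1), c ℓ • (A ^ (k - n + ℓ) * B)) := by
            rw [my_vecMul_sum]
            exact Finset.sum_congr rfl fun ℓ _ => (my_vecMul_smul ξ (c ℓ) _).symm
          rw [this, hmat, Matrix.vecMul_zero]
        rw [Finset.sum_range_succ] at hvm
        have hz : ∑ ℓ ∈ Finset.range n, c ℓ • g (k - n + ℓ) = 0 :=
          Finset.sum_eq_zero fun ℓ hℓ => by
            rw [Finset.mem_range] at hℓ
            rw [ih (k - n + ℓ) (by omega), smul_zero]
        have hcn : c n = 1 := by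
          rw [hc]; simpa using (Matrix.charpoly_monic A).coeff_natDegree
        rw [hz, zero_add, show k - n + n = k by omega, hcn, one_smul] at hvm
        exact hvm
  refine ⟨hη, hgall, ?_⟩
  intro k hk
  have h1 := hkerN k hk
  rw [hη, zero_dotProduct, add_zero] at h1
  have h2 := hdot 0 k (by omega)
  rw [Nat.zero_add] at h2
  have hz : ∑ j ∈ Finset.range k, g (k - 1 - j) ⬝ᵥ u' (0 + j) = 0 :=
    Finset.sum_eq_zero fun j _ => by rw [hgall, zero_dotProduct]
  rw [h2, hz, add_zero] at h1
  have hx0 : x' 0 = x 0 := by simp [hx']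
  rw [hx0] at h1
  exact h1

/-- For data consistent with `(A,B)`, if the input is persistently
exciting of order `n+1`, then `im [X₋; U₋] = R(A,[B x(0)]) × ℝ^m`. -/
theorem stmt_14 {n m T : ℕ} (hn : 0 < n) (hm : 0 < m)
    (A : Matrix (Fin n) (Fin n) ℝ) (B : Matrix (Fin n) (Fin m) ℝ)
    (u : Fin T → Fin m → ℝ) (x : Fin (T + 1) → Fin n → ℝ)
    (hcons : Consistent A B u x) (hPE : PE u (n + 1)) :
    colSpan (stacked (Xminus x) (Uminus u)) =
      (Rspace A (augCol B (x 0))).comap (projN n m) := by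
  classical
  have hT : 2 * n + 1 ≤ T := PE_T_bound u hm hPE
  set C := augCol B (x 0) with hC
  -- states lie in the reachable space
  have hBmem : ∀ v : Fin m → ℝ, B *ᵥ v ∈ Rspace A C := by
    intro v
    have h1 : B *ᵥ v = C *ᵥ Sum.elim v 0 := by
      rw [hC, augCol, Matrix.fromCols_mulVec_sumElim, Matrix.mulVec_zero, add_zero]
    rw [h1]
    exact mulVec_C_mem_Rspace A C _
  have hx0mem : x 0 ∈ Rspace A C := by
    have h1 : x 0 = C *ᵥ Sum.elim 0 (fun _ => 1) := by
      rw [hC, augCol, Matrix.fromCols_mulVec_sumElim, Matrix.mulVec_zero, zero_add]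
      ext i
      simp [Matrix.mulVec, dotProduct]
    rw [h1]
    exact mulVec_C_mem_Rspace A C _
  have hstate : ∀ t : Fin (T + 1), x t ∈ Rspace A C := by
    have hnat : ∀ (t : ℕ) (h : t < T + 1), x ⟨t, h⟩ ∈ Rspace A C := by
      intro t
      induction t with
      | zero => intro h; exact hx0mem
      | succ t ih =>
        intro h
        have ht : t < T := by omega
        have h2 := hcons ⟨t, ht⟩
        have h3 : x (⟨t, ht⟩ : Fin T).succ = x ⟨t + 1, h⟩ := rfl
        rw [h3] at h2
        rw [h2]
        exact Submodule.add_mem _ (mulVec_mem_Rspace A C (ih (by omega))) (hBmem _)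
    intro t
    have : x t = x ⟨(t : ℕ), t.isLt⟩ := by congr
    rw [this]
    exact hnat _ _
  apply le_antisymm
  · rintro v ⟨cvec, rfl⟩
    simp only [Submodule.mem_comap]
    have hproj : projN n m ((stacked (Xminus x) (Uminus u)).mulVecLin cvec)
        = (Xminus x) *ᵥ cvec := rfl
    rw [hproj]
    have hexp : (Xminus x) *ᵥ cvec = ∑ t : Fin T, cvec t • x t.castSucc := by
      ext i
      simp only [Matrix.mulVec, dotProduct, Xminus, Matrix.of_apply, Finset.sum_apply,
        Pi.smul_apply, smul_eq_mul]
      exact Finset.sum_congr rfl fun t _ => mul_comm _ _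
    rw [hexp]
    exact Submodule.sum_mem _ fun t _ => Submodule.smul_mem _ _ (hstate t.castSucc)
  · intro v hv
    by_contra hvW
    obtain ⟨φ, hφ1, hφ2⟩ := Submodule.exists_dual_map_eq_bot_of_notMem hvW inferInstance
    have hφW : ∀ w ∈ colSpan (stacked (Xminus x) (Uminus u)), φ w = 0 := by
      intro w hw
      have h := Submodule.mem_map_of_mem (f := φ) hw
      rw [hφ2] at h
      exact (Submodule.mem_bot ℝ).mp h
    set ξ : Fin n → ℝ := fun i => φ (fun r => if Sum.inl i = r then 1 else 0) with hξ
    set η : Fin m → ℝ := fun p => φ (fun r => if Sum.inr p = r then 1 else 0) with hη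
    have hφeval : ∀ v' : (Fin n ⊕ Fin m) → ℝ,
        φ v' = ξ ⬝ᵥ (fun i => v' (Sum.inl i)) + η ⬝ᵥ (fun p => v' (Sum.inr p)) := by
      intro v'
      rw [LinearMap.pi_apply_eq_sum_univ φ v', Fintype.sum_sum_type]
      simp only [dotProduct, smul_eq_mul, hξ, hη]
      congr 1 <;> exact Finset.sum_congr rfl fun q _ => mul_comm _ _
    have hcol : ∀ t : Fin T,
        (fun q => stacked (Xminus x) (Uminus u) q t) ∈ colSpan (stacked (Xminus x) (Uminus u)) := by
      intro t
      refine ⟨Pi.single t 1, ?_⟩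
      ext q
      simp [Matrix.mulVecLin_apply, Matrix.mulVec, dotProduct, Pi.single_apply, mul_ite]
    have hker : ∀ t : Fin T, ξ ⬝ᵥ x t.castSucc + η ⬝ᵥ u t = 0 := by
      intro t
      have h := hφW _ (hcol t)
      rw [hφeval] at h
      exact h
    obtain ⟨hη0, hgall, hx00⟩ := key_kernel hn hm A B u x hcons hPE ξ η hker
    have hproj : projN n m v ∈ Rspace A C := hv
    obtain ⟨z, hz⟩ := hproj
    have hξR : ξ ᵥ* reachMat A C = 0 := by
      ext q
      obtain ⟨k, q2⟩ := q
      match q2 with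
      | Sum.inl p =>
        have h1 : (ξ ᵥ* reachMat A C) (k, Sum.inl p) = (ξ ᵥ* (A ^ (k : ℕ) * B)) p := by
          simp only [Matrix.vecMul, dotProduct, reachMat, Matrix.of_apply, Matrix.mul_apply,
            hC, augCol, Matrix.fromCols_apply_inl]
        rw [h1, hgall]
        rfl
      | Sum.inr p =>
        have h1 : (ξ ᵥ* reachMat A C) (k, Sum.inr p) = ξ ⬝ᵥ (A ^ (k : ℕ) *ᵥ x 0) := by
          simp only [Matrix.vecMul, dotProduct, reachMat, Matrix.of_apply, Matrix.mul_apply,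
            hC, augCol, Matrix.fromCols_apply_inr, Matrix.mulVec]
        rw [h1, hx00 _ (by have := k.isLt; omega)]
        rfl
    have hφv : φ v = 0 := by
      rw [hφeval v, hη0, zero_dotProduct, add_zero]
      have h2 : (fun i => v (Sum.inl i)) = reachMat A C *ᵥ z := hz.symm
      rw [h2, dotProduct_mulVec, hξR, zero_dotProduct]
    exact hφ1 hφv
end
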